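/- arXiv:2107.07747 — 8 statements merged into one kernel-verified Lean document; each statement's English description precedes it below -/
import Mathlib

section
/- Let X be a separable metrizable space of cardinality continuum that is 𝔠-crowded and such that every 𝔠-crowded subspace of X is rigid. Then X cannot be written as a countable union of homogeneous subspaces. -/
open Cardinal Set

lemma aleph0_lt_cof_continuum' : ℵ₀ < (Cardinal.continuum.ord).cof := by
  have := Cardinal.lt_cof_power (le_refl ℵ₀) one_lt_two
  rwa [Cardinal.two_power_aleph0] at this

universe u

lemma small_iUnion' {α : Type u} (t : ℕ → Set α) (h : ∀ n, #(t n) < 𝔠) :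
    #(⋃ n, t n) < 𝔠 := by
  have he : (⋃ n, t n) = ⋃ i : ULift.{u} ℕ, t i.down := by
    ext x; simp only [Set.mem_iUnion]
    exact ⟨fun ⟨n, hn⟩ => ⟨⟨n⟩, hn⟩, fun ⟨i, hi⟩ => ⟨i.down, hi⟩⟩
  rw [he]
  refine lt_of_le_of_lt (Cardinal.mk_iUnion_le _) ?_
  have h1 : #(ULift.{u} ℕ) = ℵ₀ := by simp
  have h2 : (⨆ i : ULift.{u} ℕ, #(t i.down)) < 𝔠 :=
    Ordinal.iSup_lt (by rw [h1]; exact aleph0_lt_cof_continuum') (fun i => h i.down)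
  exact Cardinal.mul_lt_of_lt Cardinal.aleph0_le_continuum
    (h1 ▸ Cardinal.aleph0_lt_continuum) h2

/-- A space is homogeneous if for all `x, y` there is a self-homeomorphism sending `x` to `y`. -/
def IsHomogeneousSpace (X : Type*) [TopologicalSpace X] : Prop :=
  ∀ x y : X, ∃ h : X ≃ₜ X, h x = y

/-- A space is `𝔠`-crowded if it is nonempty and every non-empty open subset has
cardinality continuum. -/
def CCrowdedSpace (X : Type*) [TopologicalSpace X] : Prop :=
  Nonempty X ∧ ∀ U : Set X, IsOpen U → U.Nonempty → Cardinal.mk U = Cardinal.continuum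

/-- A space is rigid if it has at least two points and its only self-homeomorphism is
the identity. -/
def RigidSpace (X : Type*) [TopologicalSpace X] : Prop :=
  (∃ a b : X, a ≠ b) ∧ ∀ h : X ≃ₜ X, ∀ x : X, h x = x

/-- A 𝔠-hereditarily rigid separable metrizable space of cardinality 𝔠 is not σ-homogeneous. -/
theorem statement1 (X : Type*) [TopologicalSpace X] [TopologicalSpace.MetrizableSpace X]
    [TopologicalSpace.SeparableSpace X]
    (hcard : Cardinal.mk X = Cardinal.continuum)
    (hcrowded : CCrowdedSpace X)
    (hrigid : ∀ S : Set X, CCrowdedSpace S → RigidSpace S) :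
    ¬ ∃ Y : ℕ → Set X, (⋃ n, Y n) = Set.univ ∧ ∀ n, IsHomogeneousSpace (Y n) := by
  rintro ⟨Y, hcover, hhom⟩
  haveI : SecondCountableTopology X := by
    letI := TopologicalSpace.metrizableSpaceMetric X
    exact UniformSpace.secondCountable_of_separable X
  have hsetle : ∀ s : Set X, #s ≤ 𝔠 := fun s => hcard ▸ Cardinal.mk_set_le s
  -- Step 1: some piece has cardinality continuum
  obtain ⟨n, hn⟩ : ∃ n, #(Y n) = 𝔠 := by
    by_contra hcon
    push_neg at hcon
    have hlt : #(⋃ m, Y m) < 𝔠 :=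
      small_iUnion' Y fun m => (hsetle (Y m)).lt_of_ne (hcon m)
    rw [hcover, Cardinal.mk_univ, hcard] at hlt
    exact lt_irrefl _ hlt
  set T := Y n with hT
  -- Step 2: the small part of T
  obtain ⟨B, hBc, -, hB⟩ := TopologicalSpace.exists_countable_basis X
  set 𝒮 : Set (Set X) := {U ∈ B | #(↥(U ∩ T)) < 𝔠} with h𝒮
  set S : Set X := ⋃ U ∈ 𝒮, U ∩ T with hS
  have hScard : #S < 𝔠 := by
    rcases Set.eq_empty_or_nonempty 𝒮 with h | h
    · rw [hS, h]
      simp only [Set.mem_empty_iff_false, Set.iUnion_of_empty, Set.iUnion_empty]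
      simpa using Cardinal.aleph0_lt_continuum.trans_le' (by simp)
    · obtain ⟨f, hf⟩ := Set.Countable.exists_eq_range (hBc.mono (Set.sep_subset _ _)) h
      have h𝒮f : 𝒮 = Set.range f := hf
      have hSe : S = ⋃ m, f m ∩ T := by rw [hS, h𝒮f, Set.biUnion_range]
      rw [hSe]
      refine small_iUnion' _ fun m => ?_
      have hm : f m ∈ 𝒮 := h𝒮f ▸ Set.mem_range_self m
      exact hm.2
  -- Key: points outside S have all neighborhoods big
  have hbig : ∀ x ∈ T \ S, ∀ V : Set X, IsOpen V → x ∈ V → #(↥(V ∩ T)) = 𝔠 := by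
    intro x hx V hV hxV
    obtain ⟨W, hWB, hxW, hWV⟩ := hB.exists_subset_of_mem_open hxV hV
    have hWbig : ¬ #(↥(W ∩ T)) < 𝔠 := by
      intro hlt
      exact hx.2 (Set.mem_biUnion (show W ∈ 𝒮 from ⟨hWB, hlt⟩) ⟨hxW, hx.1⟩)
    refine le_antisymm (hsetle _) ?_
    calc 𝔠 ≤ #(↥(W ∩ T)) := not_lt.1 hWbig
      _ ≤ #(↥(V ∩ T)) :=
        Cardinal.mk_le_mk_of_subset (Set.inter_subset_inter_left T hWV)
  set Z : Set X := T \ S with hZ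
  have hsplit : ∀ V : Set X, V ∩ T ⊆ (V ∩ Z) ∪ S := by
    intro V x hx
    by_cases hxs : x ∈ S
    · exact Or.inr hxs
    · exact Or.inl ⟨hx.1, hx.2, hxs⟩
  have hbigZ : ∀ x ∈ Z, ∀ V : Set X, IsOpen V → x ∈ V → 𝔠 ≤ #(↥(V ∩ Z)) := by
    intro x hx V hV hxV
    by_contra hlt
    push_neg at hlt
    have h1 : #(↥(V ∩ T)) ≤ #(↥((V ∩ Z) ∪ S)) :=
      Cardinal.mk_le_mk_of_subset (hsplit V)
    have h2 : #(↥((V ∩ Z) ∪ S)) ≤ #(↥(V ∩ Z)) + #S := Cardinal.mk_union_le _ _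
    have h3 : #(↥(V ∩ Z)) + #S < 𝔠 :=
      Cardinal.add_lt_of_lt Cardinal.aleph0_le_continuum hlt hScard
    rw [hbig x hx V hV hxV] at h1
    exact absurd (h1.trans h2) (not_le.2 h3)
  have hZge : 𝔠 ≤ #(↥Z) := by
    have := hbigZ
    by_contra hlt
    push_neg at hlt
    have h1 : #(↥T) ≤ #(↥(Set.univ ∩ Z)) + #S := by
      refine (Cardinal.mk_le_mk_of_subset ?_).trans (Cardinal.mk_union_le _ _)
      intro x hx
      simpa using hsplit Set.univ ⟨Set.mem_univ x, hx⟩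
    have h2 : #(↥(Set.univ ∩ Z)) ≤ #(↥Z) :=
      Cardinal.mk_le_mk_of_subset (Set.inter_subset_right)
    have h3 : #(↥(Set.univ ∩ Z)) + #S < 𝔠 :=
      Cardinal.add_lt_of_lt Cardinal.aleph0_le_continuum (h2.trans_lt hlt) hScard
    rw [hn] at h1
    exact absurd h1 (not_le.2 h3)
  have hZeq : #(↥Z) = 𝔠 := le_antisymm (hsetle Z) hZge
  -- Z is c-crowded
  have hcrZ : CCrowdedSpace ↥Z := by
    constructor
    · exact Cardinal.mk_ne_zero_iff.1 (by rw [hZeq]; exact Cardinal.continuum_ne_zero)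
    · intro U hU hUne
      obtain ⟨V, hV, hVU⟩ := isOpen_induced_iff.1 hU
      obtain ⟨⟨x, hxZ⟩, hxU⟩ := hUne
      have hxV : x ∈ V := by rw [← hVU] at hxU; exact hxU
      have hVZ : 𝔠 ≤ #(↥(V ∩ Z)) := hbigZ x hxZ V hV hxV
      have hinj : #(↥(V ∩ Z)) ≤ #U := by
        refine Cardinal.mk_le_of_injective
          (f := fun y => ⟨⟨y.1, y.2.2⟩, by rw [← hVU]; exact y.2.1⟩) ?_
        intro y₁ y₂ hy
        simp only [Subtype.mk.injEq] at hy
        exact Subtype.ext hy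
      refine le_antisymm ?_ (hVZ.trans hinj)
      exact (Cardinal.mk_set_le U).trans_eq hZeq
  obtain ⟨⟨a, b, hab⟩, hid⟩ := hrigid Z hcrZ
  -- Homogeneity of T
  obtain ⟨h, hh⟩ := hhom n ⟨(a : X), a.2.1⟩ ⟨(b : X), b.2.1⟩
  -- topological characterization of Z inside T
  set P : ↥T → Prop := fun y => ∀ W : Set ↥T, IsOpen W → y ∈ W → #(↥W) = 𝔠 with hP
  have claim1 : ∀ y : ↥T, (y : X) ∈ Z ↔ P y := by
    intro y
    constructor
    · intro hyZ W hW hyW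
      obtain ⟨V, hV, hVW⟩ := isOpen_induced_iff.1 hW
      have hyV : (y : X) ∈ V := by rw [← hVW] at hyW; exact hyW
      have hVT : #(↥(V ∩ T)) = 𝔠 := hbig (y : X) hyZ V hV hyV
      refine le_antisymm ((Cardinal.mk_set_le W).trans_eq hn) ?_
      rw [← hVT]
      refine Cardinal.mk_le_of_injective
        (f := fun z => ⟨⟨z.1, z.2.2⟩, by rw [← hVW]; exact z.2.1⟩) ?_
      intro z₁ z₂ hz
      simp only [Subtype.mk.injEq] at hz
      exact Subtype.ext hz
    · intro hPy
      refine ⟨y.2, fun hyS => ?_⟩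
      obtain ⟨U, hU𝒮, hyU⟩ := Set.mem_iUnion₂.1 hyS
      have hWo : IsOpen ((Subtype.val : ↥T → X) ⁻¹' U) :=
        (hB.isOpen hU𝒮.1).preimage continuous_subtype_val
      have hyW : y ∈ (Subtype.val : ↥T → X) ⁻¹' U := hyU.1
      have hWc : #(↥((Subtype.val : ↥T → X) ⁻¹' U)) = 𝔠 := hPy _ hWo hyW
      have hle : #(↥((Subtype.val : ↥T → X) ⁻¹' U)) ≤ #(↥(U ∩ T)) := by
        refine Cardinal.mk_le_of_injective
          (f := fun w => ⟨(w.1 : X), w.2, w.1.2⟩) ?_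
        intro w₁ w₂ hw
        simp only [Subtype.mk.injEq] at hw
        exact Subtype.ext (Subtype.ext (congrArg (Subtype.val : ↥(U ∩ T) → X) hw))
      rw [hWc] at hle
      exact absurd (hle.trans_lt hU𝒮.2) (lt_irrefl 𝔠)
  have claim2 : ∀ (e : ↥T ≃ₜ ↥T) (y : ↥T), P y → P (e y) := by
    intro e y hy W hW hyW
    have h1 : IsOpen (e ⁻¹' W) := hW.preimage e.continuous
    have h2 : y ∈ e ⁻¹' W := hyW
    have h3 := hy _ h1 h2
    have heq : #(↥(⇑e ⁻¹' W)) = #(↥W) :=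
      Cardinal.mk_preimage_of_injective_of_subset_range _ _ e.injective
        (by rw [e.surjective.range_eq]; exact Set.subset_univ _)
    rw [← heq]
    exact h3
  have key : ∀ y : ↥T, (y : X) ∈ Z → ((h y : X) ∈ Z) := fun y hy =>
    (claim1 (h y)).2 (claim2 h y ((claim1 y).1 hy))
  have key' : ∀ y : ↥T, (y : X) ∈ Z → ((h.symm y : X) ∈ Z) := fun y hy =>
    (claim1 (h.symm y)).2 (claim2 h.symm y ((claim1 y).1 hy))
  -- build a self-homeomorphism of Z
  let g : ↥Z ≃ₜ ↥Z :=
    { toFun := fun z => ⟨(h ⟨(z : X), z.2.1⟩ : X), key _ z.2⟩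
      invFun := fun z => ⟨(h.symm ⟨(z : X), z.2.1⟩ : X), key' _ z.2⟩
      left_inv := fun z => by
        apply Subtype.ext
        show ((h.symm (h ⟨(z : X), z.2.1⟩) : ↥T) : X) = (z : X)
        rw [h.symm_apply_apply]
      right_inv := fun z => by
        apply Subtype.ext
        show ((h (h.symm ⟨(z : X), z.2.1⟩) : ↥T) : X) = (z : X)
        rw [h.apply_symm_apply]
      continuous_toFun := Continuous.subtype_mk
        ((continuous_subtype_val.comp h.continuous).comp
          (Continuous.subtype_mk continuous_subtype_val _)) _
      continuous_invFun := Continuous.subtype_mk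
        ((continuous_subtype_val.comp h.symm.continuous).comp
          (Continuous.subtype_mk continuous_subtype_val _)) _ }
  have hga : g a = a := hid g a
  have hgb : (g a : X) = (b : X) := by
    show (h ⟨(a : X), a.2.1⟩ : X) = (b : X)
    rw [hh]
  rw [hga] at hgb
  exact hab (Subtype.ext hgb)
end

section
/- Assume every subset of every Polish space has the Baire property. Let Z be a Polish space and let X be a dense subspace of Z that is a Baire space. Then X is comeager in Z. -/
open Filter Set

lemma dense_tendsto_residual {Z : Type*} [TopologicalSpace Z] {X : Set Z} (hX : Dense X) :
    Tendsto (Subtype.val : X → Z) (residual X) (residual Z) := by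
  apply le_countableGenerate_iff_of_countableInterFilter.mpr
  rintro t ⟨ht, htd⟩
  apply residual_of_dense_open (ht.preimage continuous_subtype_val)
  rw [Subtype.dense_iff]
  have himg : (Subtype.val '' ((Subtype.val : X → Z) ⁻¹' t)) = X ∩ t :=
    Subtype.image_preimage_coe X t
  rw [himg, Set.inter_comm]
  intro x _
  exact (htd.inter_of_isOpen_left hX ht) x

/-- Assuming every subset of every Polish space has the Baire property (BP), every dense
Baire subspace of a Polish space is comeager. -/
theorem statement2
    (hBP : ∀ (W : Type) [TopologicalSpace W] [PolishSpace W] (A : Set W), BaireMeasurableSet A)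
    (Z : Type) [TopologicalSpace Z] [PolishSpace Z]
    (X : Set Z) (hdense : Dense X) (hBaire : BaireSpace X) :
    X ∈ residual Z := by
  obtain ⟨V, hVopen, hVeq⟩ := (hBP Z Xᶜ).residualEq_isOpen
  -- hVeq : Xᶜ =ᶠ[residual Z] V
  have hVempty : V = ∅ := by
    by_contra hne
    rw [← Set.not_nonempty_iff_eq_empty, not_not] at hne
    -- V ∩ X is meager in Z
    have hmeager : IsMeagre (V ∩ X) := by
      have : {z | (z ∈ Xᶜ) = (z ∈ V)} ∈ residual Z := hVeq
      apply Filter.mem_of_superset this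
      intro z hz
      simp only [mem_setOf_eq] at hz
      intro hzV
      have : z ∈ Xᶜ := by rw [hz]; exact hzV.1
      exact this hzV.2
    -- pull back to X
    have hmeagerX : IsMeagre ((Subtype.val : X → Z) ⁻¹' (V ∩ X)) :=
      dense_tendsto_residual hdense hmeager
    have hpre : (Subtype.val : X → Z) ⁻¹' (V ∩ X) = (Subtype.val : X → Z) ⁻¹' V := by
      ext x; simp [x.2]
    rw [hpre] at hmeagerX
    -- the preimage is nonempty open in the Baire space X
    obtain ⟨z, hzV, hzX⟩ := hdense.inter_open_nonempty V hVopen hne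
    have hopen : IsOpen ((Subtype.val : X → Z) ⁻¹' V) := hVopen.preimage continuous_subtype_val
    have hne' : ((Subtype.val : X → Z) ⁻¹' V).Nonempty := ⟨⟨z, hzX⟩, hzV⟩
    have hdc : Dense ((Subtype.val : X → Z) ⁻¹' V)ᶜ := dense_of_mem_residual hmeagerX
    obtain ⟨x, hx1, hx2⟩ := hdc.inter_open_nonempty _ hopen hne'
    exact hx2 hx1
  rw [hVempty] at hVeq
  apply Filter.mem_of_superset hVeq
  intro z hz
  simp only [mem_setOf_eq, eq_iff_iff] at hz
  by_contra h
  exact hz.mp h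
end

section
/- Let X be a separable metrizable space which has a base B consisting of clopen sets such that every U ∈ B is homeomorphic to X. Then X is strongly homogeneous, i.e., every non-empty clopen subspace of X is homeomorphic to X. -/
open Set Function Topology Metric TopologicalSpace

set_option linter.unusedSectionVars false

namespace TeradaAux

variable {X : Type*} [MetricSpace X] [Nonempty X]

open Classical in
/-- The forward shift map associated to a telescope `g` and a clopen set `S`. -/
noncomputable def shiftMap (g : ℕ → X → X) (S : Set X) : X → X := fun x =>
  if h : ∃ n, x ∈ g n '' S then g (Nat.find h + 1) (Function.invFun (g (Nat.find h)) x) else x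

open Classical in
/-- The backward shift map. -/
noncomputable def unshiftMap (g : ℕ → X → X) (S : Set X) : X → X := fun x =>
  if h : ∃ n, x ∈ g (n + 1) '' S then
    g (Nat.find h) (Function.invFun (g (Nat.find h + 1)) x) else x

section

variable {S : Set X} {g : ℕ → X → X}

lemma mono (hsub : ∀ n, range (g (n + 1)) ⊆ g n '' Sᶜ) :
    ∀ {m n : ℕ}, m ≤ n → range (g n) ⊆ range (g m) := by
  have h : ∀ n, range (g (n + 1)) ⊆ range (g n) :=
    fun n => (hsub n).trans (image_subset_range _ _)
  intro m n hmn
  exact antitone_nat_of_succ_le (f := fun n => range (g n)) h hmn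

lemma disjointW (hemb : ∀ n, IsEmbedding (g n))
    (hsub : ∀ n, range (g (n + 1)) ⊆ g n '' Sᶜ) (n : ℕ) :
    Disjoint (g n '' S) (range (g (n + 1))) := by
  refine Set.disjoint_left.mpr fun x hxS hxW => ?_
  obtain ⟨t, ht, hte⟩ := hsub n hxW
  obtain ⟨s, hs, rfl⟩ := hxS
  exact ht (((hemb n).injective hte) ▸ hs)

lemma disjointS (hemb : ∀ n, IsEmbedding (g n))
    (hsub : ∀ n, range (g (n + 1)) ⊆ g n '' Sᶜ) {m n : ℕ} (h : m < n) :
    Disjoint (g m '' S) (g n '' S) :=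
  (disjointW hemb hsub m).mono_right ((image_subset_range _ _).trans (mono hsub h))

lemma mem_unique (hemb : ∀ n, IsEmbedding (g n))
    (hsub : ∀ n, range (g (n + 1)) ⊆ g n '' Sᶜ) {m n : ℕ} {x : X}
    (h1 : x ∈ g m '' S) (h2 : x ∈ g n '' S) : m = n := by
  by_contra hne
  rcases Ne.lt_or_gt hne with h | h
  · exact Set.disjoint_left.mp (disjointS hemb hsub h) h1 h2
  · exact Set.disjoint_left.mp (disjointS hemb hsub h) h2 h1

open Classical in
lemma shiftMap_apply (hemb : ∀ n, IsEmbedding (g n))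
    (hsub : ∀ n, range (g (n + 1)) ⊆ g n '' Sᶜ) (n : ℕ) {s : X} (hs : s ∈ S) :
    shiftMap g S (g n s) = g (n + 1) s := by
  have h : ∃ m, g n s ∈ g m '' S := ⟨n, mem_image_of_mem _ hs⟩
  have hf : Nat.find h = n :=
    mem_unique hemb hsub (Nat.find_spec h) (mem_image_of_mem _ hs)
  rw [shiftMap, dif_pos h, hf, Function.leftInverse_invFun (hemb n).injective s]

open Classical in
lemma shiftMap_not {x : X} (hx : ∀ n, x ∉ g n '' S) : shiftMap g S x = x := by
  rw [shiftMap, dif_neg (not_exists.mpr hx)]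

open Classical in
lemma unshiftMap_apply (hemb : ∀ n, IsEmbedding (g n))
    (hsub : ∀ n, range (g (n + 1)) ⊆ g n '' Sᶜ) (n : ℕ) {s : X} (hs : s ∈ S) :
    unshiftMap g S (g (n + 1) s) = g n s := by
  have h : ∃ m, g (n + 1) s ∈ g (m + 1) '' S := ⟨n, mem_image_of_mem _ hs⟩
  have hf : Nat.find h = n := by
    have := mem_unique hemb hsub (Nat.find_spec h) (mem_image_of_mem (g (n + 1)) hs)
    omega
  rw [unshiftMap, dif_pos h, hf, Function.leftInverse_invFun (hemb (n + 1)).injective s]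

open Classical in
lemma unshiftMap_not {x : X} (hx : ∀ n, x ∉ g (n + 1) '' S) : unshiftMap g S x = x := by
  rw [unshiftMap, dif_neg (not_exists.mpr hx)]


lemma image_zero (hg0 : g 0 = id) : g 0 '' S = S := by rw [hg0, image_id]

lemma shiftMap_mem_compl (hg0 : g 0 = id) (hemb : ∀ n, IsEmbedding (g n))
    (hsub : ∀ n, range (g (n + 1)) ⊆ g n '' Sᶜ) (x : X) : shiftMap g S x ∈ Sᶜ := by
  by_cases h : ∃ n, x ∈ g n '' S
  · obtain ⟨n, s, hs, rfl⟩ := h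
    rw [shiftMap_apply hemb hsub n hs]
    intro hmem
    have h0 : g (n + 1) s ∈ g 0 '' S := by rwa [image_zero hg0]
    exact Nat.succ_ne_zero n (mem_unique hemb hsub (mem_image_of_mem _ hs) h0)
  · push_neg at h
    rw [shiftMap_not h]
    intro hmem
    exact h 0 (by rwa [image_zero hg0])

lemma unshift_shift (hg0 : g 0 = id) (hemb : ∀ n, IsEmbedding (g n))
    (hsub : ∀ n, range (g (n + 1)) ⊆ g n '' Sᶜ) (x : X) :
    unshiftMap g S (shiftMap g S x) = x := by
  by_cases h : ∃ n, x ∈ g n '' S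
  · obtain ⟨n, s, hs, rfl⟩ := h
    rw [shiftMap_apply hemb hsub n hs, unshiftMap_apply hemb hsub n hs]
  · push_neg at h
    rw [shiftMap_not h, unshiftMap_not fun n => h (n + 1)]

lemma shift_unshift (hg0 : g 0 = id) (hemb : ∀ n, IsEmbedding (g n))
    (hsub : ∀ n, range (g (n + 1)) ⊆ g n '' Sᶜ) (x : X) (hx : x ∈ Sᶜ) :
    shiftMap g S (unshiftMap g S x) = x := by
  by_cases h : ∃ n, x ∈ g (n + 1) '' S
  · obtain ⟨n, s, hs, rfl⟩ := h
    rw [unshiftMap_apply hemb hsub n hs, shiftMap_apply hemb hsub n hs]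
  · push_neg at h
    rw [unshiftMap_not h]
    refine shiftMap_not fun n => ?_
    cases n with
    | zero => rwa [image_zero hg0]
    | succ m => exact h m

lemma image_clopen (hS : IsClopen S) (hemb : ∀ n, IsEmbedding (g n))
    (hWcl : ∀ n, IsClopen (range (g n))) (n : ℕ) : IsClopen (g n '' S) := by
  constructor
  · exact (IsClosedEmbedding.mk (hemb n) (hWcl n).isClosed).isClosedMap _ hS.isClosed
  · exact (IsOpenEmbedding.mk (hemb n) (hWcl n).isOpen).isOpenMap _ hS.isOpen

lemma contInv (hemb : ∀ n, IsEmbedding (g n)) (n : ℕ) :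
    ContinuousOn (Function.invFun (g n)) (range (g n)) := by
  rw [continuousOn_iff_continuous_restrict]
  have h : domRestrict (range (g n)) (Function.invFun (g n))
      = fun w => (hemb n).toHomeomorph.symm w := by
    funext w
    apply (hemb n).injective
    rw [restrict_apply, Function.invFun_eq w.2]
    exact (Equiv.apply_ofInjective_symm (hemb n).injective w).symm
  rw [h]
  exact (hemb n).toHomeomorph.symm.continuous


lemma shift_cont (hS : IsClopen S) (hemb : ∀ n, IsEmbedding (g n))
    (hWcl : ∀ n, IsClopen (range (g n)))
    (hsub : ∀ n, range (g (n + 1)) ⊆ g n '' Sᶜ)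
    (hdiam : ∀ n, ∀ a ∈ range (g (n + 1)), ∀ b ∈ range (g (n + 1)),
      dist a b ≤ (1 / 2 : ℝ) ^ n) :
    Continuous (shiftMap g S) := by
  rw [continuous_iff_continuousAt]
  intro x
  by_cases h1 : ∃ n, x ∈ g n '' S
  · obtain ⟨n, hn⟩ := h1
    have hW : range (g n) ∈ 𝓝 x :=
      (hWcl n).isOpen.mem_nhds (image_subset_range _ _ hn)
    have hcont : ContinuousAt (fun y => g (n + 1) (Function.invFun (g n) y)) x :=
      ((hemb (n + 1)).continuous.continuousAt).comp ((contInv hemb n).continuousAt hW)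
    refine hcont.congr ?_
    filter_upwards [(image_clopen hS hemb hWcl n).isOpen.mem_nhds hn] with y hy
    obtain ⟨s, hs, rfl⟩ := hy
    rw [shiftMap_apply hemb hsub n hs, Function.leftInverse_invFun (hemb n).injective s]
  · push_neg at h1
    by_cases h2 : ∃ m, x ∉ range (g m)
    · obtain ⟨m, hm⟩ := h2
      have hNcl : IsClopen ((range (g m))ᶜ \ ⋃ n ∈ Finset.range m, g n '' S) :=
        (hWcl m).compl.inter
          (isClopen_biUnion_finset fun n _ => image_clopen hS hemb hWcl n).compl
      have hxN : x ∈ (range (g m))ᶜ \ ⋃ n ∈ Finset.range m, g n '' S := by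
        refine ⟨hm, ?_⟩
        simp only [mem_iUnion, not_exists]
        exact fun n _ => h1 n
      refine continuousAt_id.congr ?_
      filter_upwards [hNcl.isOpen.mem_nhds hxN] with y hy
      refine Eq.symm (shiftMap_not fun n hyn => ?_)
      rcases lt_or_ge n m with h | h
      · exact hy.2 (mem_biUnion (Finset.mem_range.mpr h) hyn)
      · exact hy.1 (mono hsub h (image_subset_range _ _ hyn))
    · push_neg at h2
      have hx : shiftMap g S x = x := shiftMap_not h1
      rw [ContinuousAt, hx]
      refine Metric.tendsto_nhds.mpr fun ε hε => ?_
      obtain ⟨n, hn⟩ : ∃ n, (1 / 2 : ℝ) ^ n < ε :=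
        exists_pow_lt_of_lt_one hε (by norm_num)
      filter_upwards [(hWcl (n + 1)).isOpen.mem_nhds (h2 (n + 1))] with y hy
      have hmem : shiftMap g S y ∈ range (g (n + 1)) := by
        by_cases hy2 : ∃ m, y ∈ g m '' S
        · obtain ⟨m, s, hs, rfl⟩ := hy2
          have hmn : n + 1 ≤ m := by
            by_contra hlt
            push_neg at hlt
            have hy3 : g m s ∈ range (g (m + 1)) := mono hsub (by omega) hy
            exact Set.disjoint_left.mp (disjointW hemb hsub m)
              (mem_image_of_mem _ hs) hy3
          rw [shiftMap_apply hemb hsub m hs]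
          exact mono hsub (by omega) (mem_range_self s)
        · push_neg at hy2
          rw [shiftMap_not hy2]
          exact hy
      calc dist (shiftMap g S y) x ≤ (1 / 2 : ℝ) ^ n :=
            hdiam n _ hmem _ (h2 (n + 1))
        _ < ε := hn

lemma unshift_cont (hS : IsClopen S) (hemb : ∀ n, IsEmbedding (g n))
    (hWcl : ∀ n, IsClopen (range (g n)))
    (hsub : ∀ n, range (g (n + 1)) ⊆ g n '' Sᶜ)
    (hdiam : ∀ n, ∀ a ∈ range (g (n + 1)), ∀ b ∈ range (g (n + 1)),
      dist a b ≤ (1 / 2 : ℝ) ^ n) :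
    Continuous (unshiftMap g S) := by
  rw [continuous_iff_continuousAt]
  intro x
  by_cases h1 : ∃ n, x ∈ g (n + 1) '' S
  · obtain ⟨n, hn⟩ := h1
    have hW : range (g (n + 1)) ∈ 𝓝 x :=
      (hWcl (n + 1)).isOpen.mem_nhds (image_subset_range _ _ hn)
    have hcont : ContinuousAt (fun y => g n (Function.invFun (g (n + 1)) y)) x :=
      ((hemb n).continuous.continuousAt).comp ((contInv hemb (n + 1)).continuousAt hW)
    refine hcont.congr ?_
    filter_upwards [(image_clopen hS hemb hWcl (n + 1)).isOpen.mem_nhds hn] with y hy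
    obtain ⟨s, hs, rfl⟩ := hy
    rw [unshiftMap_apply hemb hsub n hs,
      Function.leftInverse_invFun (hemb (n + 1)).injective s]
  · push_neg at h1
    by_cases h2 : ∃ m, x ∉ range (g m)
    · obtain ⟨m, hm⟩ := h2
      have hNcl : IsClopen ((range (g m))ᶜ \ ⋃ n ∈ Finset.range m, g (n + 1) '' S) :=
        (hWcl m).compl.inter
          (isClopen_biUnion_finset fun n _ => image_clopen hS hemb hWcl (n + 1)).compl
      have hxN : x ∈ (range (g m))ᶜ \ ⋃ n ∈ Finset.range m, g (n + 1) '' S := by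
        refine ⟨hm, ?_⟩
        simp only [mem_iUnion, not_exists]
        exact fun n _ => h1 n
      refine continuousAt_id.congr ?_
      filter_upwards [hNcl.isOpen.mem_nhds hxN] with y hy
      refine Eq.symm (unshiftMap_not fun n hyn => ?_)
      rcases lt_or_ge n m with h | h
      · exact hy.2 (mem_biUnion (Finset.mem_range.mpr h) hyn)
      · exact hy.1 (mono hsub (by omega) (image_subset_range _ _ hyn))
    · push_neg at h2
      have hx : unshiftMap g S x = x := unshiftMap_not h1
      rw [ContinuousAt, hx]
      refine Metric.tendsto_nhds.mpr fun ε hε => ?_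
      obtain ⟨n, hn⟩ : ∃ n, (1 / 2 : ℝ) ^ n < ε :=
        exists_pow_lt_of_lt_one hε (by norm_num)
      filter_upwards [(hWcl (n + 2)).isOpen.mem_nhds (h2 (n + 2))] with y hy
      have hmem : unshiftMap g S y ∈ range (g (n + 1)) := by
        by_cases hy2 : ∃ m, y ∈ g (m + 1) '' S
        · obtain ⟨m, s, hs, rfl⟩ := hy2
          have hmn : n + 1 ≤ m := by
            by_contra hlt
            push_neg at hlt
            have hy3 : g (m + 1) s ∈ range (g (m + 2)) := mono hsub (by omega) hy
            exact Set.disjoint_left.mp (disjointW hemb hsub (m + 1))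
              (mem_image_of_mem _ hs) hy3
          rw [unshiftMap_apply hemb hsub m hs]
          exact mono hsub (by omega) (mem_range_self s)
        · push_neg at hy2
          rw [unshiftMap_not hy2]
          exact mono hsub (by omega) hy
      calc dist (unshiftMap g S y) x ≤ (1 / 2 : ℝ) ^ n :=
            hdiam n _ hmem _ (mono hsub (by omega) (h2 (n + 2)))
        _ < ε := hn

lemma terada_shift (hS : IsClopen S) (hg0 : g 0 = id)
    (hemb : ∀ n, IsEmbedding (g n))
    (hWcl : ∀ n, IsClopen (range (g n)))
    (hsub : ∀ n, range (g (n + 1)) ⊆ g n '' Sᶜ)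
    (hdiam : ∀ n, ∀ a ∈ range (g (n + 1)), ∀ b ∈ range (g (n + 1)),
      dist a b ≤ (1 / 2 : ℝ) ^ n) :
    Nonempty (X ≃ₜ (Sᶜ : Set X)) := by
  refine ⟨{
    toFun := fun x => ⟨shiftMap g S x, shiftMap_mem_compl hg0 hemb hsub x⟩
    invFun := fun y => unshiftMap g S y
    left_inv := fun x => unshift_shift hg0 hemb hsub x
    right_inv := fun y => Subtype.ext (shift_unshift hg0 hemb hsub y y.2)
    continuous_toFun := (shift_cont hS hemb hWcl hsub hdiam).subtype_mk _
    continuous_invFun := (unshift_cont hS hemb hWcl hsub hdiam).comp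
      continuous_subtype_val }⟩

end

lemma exists_small_copy (B : Set (Set X)) (hbase : IsTopologicalBasis B)
    (hclopen : ∀ U ∈ B, IsClopen U) (hhomeo : ∀ U ∈ B, Nonempty (U ≃ₜ X))
    {O : Set X} (hO : IsOpen O) (hne : O.Nonempty) {ε : ℝ} (hε : 0 < ε) :
    ∃ g : X → X, IsEmbedding g ∧ IsClopen (range g) ∧ range g ⊆ O ∧
      ∀ a ∈ range g, ∀ b ∈ range g, dist a b ≤ ε := by
  obtain ⟨x, hx⟩ := hne
  have hxm : x ∈ O ∩ ball x (ε / 2) := ⟨hx, mem_ball_self (by linarith)⟩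
  obtain ⟨U, hUB, hxU, hUsub⟩ := hbase.exists_subset_of_mem_open hxm (hO.inter isOpen_ball)
  obtain ⟨e⟩ := hhomeo U hUB
  have hrange : range (Subtype.val ∘ ⇑e.symm) = U := by
    rw [range_comp, e.symm.surjective.range_eq, image_univ, Subtype.range_coe]
  refine ⟨Subtype.val ∘ ⇑e.symm, IsEmbedding.subtypeVal.comp e.symm.isEmbedding, ?_, ?_, ?_⟩
  · rw [hrange]; exact hclopen U hUB
  · rw [hrange]; exact hUsub.trans inter_subset_left
  · rw [hrange]
    intro a ha b hb
    have h1 : dist a x < ε / 2 := mem_ball.mp (hUsub ha).2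
    have h2 : dist b x < ε / 2 := mem_ball.mp (hUsub hb).2
    calc dist a b ≤ dist a x + dist x b := dist_triangle a x b
      _ ≤ ε := by rw [dist_comm x b]; linarith

lemma terada_key (B : Set (Set X)) (hbase : IsTopologicalBasis B)
    (hclopen : ∀ U ∈ B, IsClopen U) (hhomeo : ∀ U ∈ B, Nonempty (U ≃ₜ X))
    (S : Set X) (hS : IsClopen S) (hne : Sᶜ.Nonempty) :
    Nonempty (X ≃ₜ (Sᶜ : Set X)) := by
  have step : ∀ c : {g : X → X // IsEmbedding g ∧ IsClopen (range g)}, ∀ n : ℕ,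
      ∃ c' : {g : X → X // IsEmbedding g ∧ IsClopen (range g)},
        range c'.1 ⊆ c.1 '' Sᶜ ∧ ∀ a ∈ range c'.1, ∀ b ∈ range c'.1,
          dist a b ≤ (1 / 2 : ℝ) ^ n := by
    intro c n
    have hopen : IsOpen (c.1 '' Sᶜ) :=
      (IsOpenEmbedding.mk c.2.1 c.2.2.isOpen).isOpenMap _ hS.compl.isOpen
    obtain ⟨g', h1, h2, h3, h4⟩ := exists_small_copy B hbase hclopen hhomeo hopen
      (hne.image c.1) (pow_pos (by norm_num : (0:ℝ) < 1 / 2) n)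
    exact ⟨⟨g', h1, h2⟩, h3, h4⟩
  let F : ℕ → {g : X → X // IsEmbedding g ∧ IsClopen (range g)} := fun n =>
    Nat.rec ⟨id, IsEmbedding.id, by rw [range_id]; exact isClopen_univ⟩
      (fun n c => (step c n).choose) n
  have hspec : ∀ n, range (F (n + 1)).1 ⊆ (F n).1 '' Sᶜ ∧
      ∀ a ∈ range (F (n + 1)).1, ∀ b ∈ range (F (n + 1)).1,
        dist a b ≤ (1 / 2 : ℝ) ^ n :=
    fun n => (step (F n) n).choose_spec
  exact terada_shift hS rfl (fun n => (F n).2.1) (fun n => (F n).2.2)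
    (fun n => (hspec n).1) (fun n => (hspec n).2)

end TeradaAux

/-- Terada's lemma: if a separable metrizable space `X` has a base of clopen sets each
homeomorphic to `X`, then `X` is strongly homogeneous: every non-empty clopen subspace
is homeomorphic to `X`. -/
theorem statement3 (X : Type*) [TopologicalSpace X] [TopologicalSpace.MetrizableSpace X]
    [TopologicalSpace.SeparableSpace X]
    (B : Set (Set X)) (hbase : TopologicalSpace.IsTopologicalBasis B)
    (hclopen : ∀ U ∈ B, IsClopen U)
    (hhomeo : ∀ U ∈ B, Nonempty (U ≃ₜ X)) :
    ∀ V : Set X, IsClopen V → V.Nonempty → Nonempty (V ≃ₜ X) := by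
  intro V hV hVne
  have : Nonempty X := ⟨hVne.choose⟩
  letI : MetricSpace X := TopologicalSpace.metrizableSpaceMetric X
  obtain ⟨e⟩ := TeradaAux.terada_key B hbase hclopen hhomeo Vᶜ hV.compl
    (by simpa using hVne)
  exact ⟨(e.trans (Homeomorph.setCongr (compl_compl V))).symm⟩
end

section
/- Every zero-dimensional separable metrizable strongly homogeneous space is homogeneous. -/
open TopologicalSpace Set Filter Topology
open scoped Classical

section Aux

variable {X : Type*} [TopologicalSpace X]

/-- Piecewise map sending `x` to `y` and each piece `A n` into `B n`. -/
noncomputable def pmapAux (x y : X) (A B : ℕ → Set X) (φ : ∀ n, (A n) → (B n))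
    (hcov : ∀ z : X, z ≠ x → ∃ n, z ∈ A n) : X → X :=
  fun z => if hz : z = x then y
    else ((φ (Nat.find (hcov z hz)) ⟨z, Nat.find_spec (hcov z hz)⟩ : B _) : X)

theorem pmapAux_self (x y : X) (A B : ℕ → Set X) (φ : ∀ n, (A n) → (B n))
    (hcov : ∀ z : X, z ≠ x → ∃ n, z ∈ A n) : pmapAux x y A B φ hcov x = y := by
  simp [pmapAux]

theorem pmapAux_of_mem {x y : X} {A B : ℕ → Set X} {φ : ∀ n, (A n) → (B n)}
    {hcov : ∀ z : X, z ≠ x → ∃ n, z ∈ A n}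
    (hdisj : ∀ (z : X) (m n : ℕ), z ∈ A m → z ∈ A n → m = n)
    (hx : ∀ n, x ∉ A n) {z : X} {n : ℕ} (hz : z ∈ A n) :
    pmapAux x y A B φ hcov z = ((φ n ⟨z, hz⟩ : B n) : X) := by
  have hzx : z ≠ x := fun h => hx n (h ▸ hz)
  simp only [pmapAux, dif_neg hzx]
  obtain rfl := hdisj z _ _ (Nat.find_spec (hcov z hzx)) hz
  rfl

theorem pmapAux_leftInverse {x y : X} {A B : ℕ → Set X}
    {φ : ∀ n, (A n) → (B n)} {ψ : ∀ n, (B n) → (A n)}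
    (hcov : ∀ z : X, z ≠ x → ∃ n, z ∈ A n) (hcov' : ∀ z : X, z ≠ y → ∃ n, z ∈ B n)
    (hdisjA : ∀ (z : X) (m n : ℕ), z ∈ A m → z ∈ A n → m = n)
    (hdisjB : ∀ (z : X) (m n : ℕ), z ∈ B m → z ∈ B n → m = n)
    (hxA : ∀ n, x ∉ A n) (hyB : ∀ n, y ∉ B n)
    (hinv : ∀ n a, ψ n (φ n a) = a) :
    ∀ z, pmapAux y x B A ψ hcov' (pmapAux x y A B φ hcov z) = z := by
  intro z
  by_cases hz : z = x
  · subst hz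
    rw [pmapAux_self, pmapAux_self]
  · obtain ⟨n, hn⟩ := hcov z hz
    rw [pmapAux_of_mem hdisjA hxA hn]
    have hw : ((φ n ⟨z, hn⟩ : B n) : X) ∈ B n := (φ n ⟨z, hn⟩).2
    rw [pmapAux_of_mem hdisjB hyB hw]
    have : (⟨((φ n ⟨z, hn⟩ : B n) : X), hw⟩ : B n) = φ n ⟨z, hn⟩ := rfl
    rw [this, hinv]

theorem pmapAux_continuous {x y : X} {U V A B : ℕ → Set X} {φ : ∀ n, (A n) → (B n)}
    (hcov : ∀ z : X, z ≠ x → ∃ n, z ∈ A n)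
    (hdisj : ∀ (z : X) (m n : ℕ), z ∈ A m → z ∈ A n → m = n)
    (hx : ∀ n, x ∉ A n)
    (hAo : ∀ n, IsOpen (A n))
    (hφ : ∀ n, Continuous (φ n))
    (hU : ∀ m, U m ∈ 𝓝 x)
    (hUA : ∀ m (z : X), z ∈ U m → z = x ∨ ∃ n, m ≤ n ∧ z ∈ A n)
    (hBV : ∀ m n, m ≤ n → B n ⊆ V m)
    (hV : ∀ W ∈ 𝓝 y, ∃ m, V m ⊆ W) :
    Continuous (pmapAux x y A B φ hcov) := by
  rw [continuous_iff_continuousAt]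
  intro z
  by_cases hz : z = x
  · subst hz
    unfold ContinuousAt
    rw [pmapAux_self]
    intro W hW
    rw [Filter.mem_map]
    obtain ⟨m, hm⟩ := hV W hW
    refine Filter.mem_of_superset (hU m) ?_
    intro w hw
    rcases hUA m w hw with hwz | ⟨n, hmn, hwn⟩
    · simp only [Set.mem_preimage, hwz, pmapAux_self]
      exact mem_of_mem_nhds hW
    · simp only [Set.mem_preimage]
      rw [pmapAux_of_mem hdisj hx hwn]
      exact hm (hBV m n hmn (φ n ⟨w, hwn⟩).2)
  · obtain ⟨n, hn⟩ := hcov z hz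
    set f : X → X := fun w => if hw : w ∈ A n then ((φ n ⟨w, hw⟩ : B n) : X) else y with hf
    have hfc : ContinuousOn f (A n) := by
      rw [continuousOn_iff_continuous_restrict]
      have : (A n).domRestrict f = fun a : A n => ((φ n a : B n) : X) := by
        funext a
        simp only [domRestrict, hf, dif_pos a.2]
      rw [this]
      exact continuous_subtype_val.comp (hφ n)
    have hfz : ContinuousAt f z := hfc.continuousAt ((hAo n).mem_nhds hn)
    refine hfz.congr ?_
    refine Filter.eventuallyEq_of_mem ((hAo n).mem_nhds hn) ?_
    intro w hw
    rw [pmapAux_of_mem hdisj hx hw]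
    simp only [hf, dif_pos hw]

theorem exists_shrink [T1Space X] [FirstCountableTopology X]
    (hzd : ∃ Bs : Set (Set X), IsTopologicalBasis Bs ∧ ∀ U ∈ Bs, IsClopen U)
    (x : X) (hni : ∀ C : Set X, IsClopen C → x ∈ C → ∃ z ∈ C, z ≠ x) :
    ∃ U : ℕ → Set X, U 0 = univ ∧ (∀ n, IsClopen (U n)) ∧ (∀ n, x ∈ U n) ∧
      (∀ n, U (n+1) ⊆ U n) ∧ (∀ n, (U n \ U (n+1)).Nonempty) ∧
      (∀ W ∈ 𝓝 x, ∃ m, U m ⊆ W) := by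
  classical
  obtain ⟨s, hs⟩ := (𝓝 x).exists_antitone_basis
  obtain ⟨Bs, hBs, hBsc⟩ := hzd
  have key : ∀ C : Set X, IsClopen C → x ∈ C → ∀ n : ℕ,
      ∃ D : Set X, IsClopen D ∧ x ∈ D ∧ D ⊆ C ∧ D ⊆ s n ∧ (C \ D).Nonempty := by
    intro C hC hxC n
    obtain ⟨z, hzC, hzx⟩ := hni C hC hxC
    have hsn : s n ∈ 𝓝 x := hs.mem n
    have hO : IsOpen (C ∩ interior (s n) ∩ {z}ᶜ) :=
      (hC.2.inter isOpen_interior).inter isOpen_compl_singleton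
    have hxO : x ∈ C ∩ interior (s n) ∩ {z}ᶜ :=
      ⟨⟨hxC, mem_interior_iff_mem_nhds.mpr hsn⟩, fun h => hzx (by simpa using h.symm)⟩
    obtain ⟨D, hD, hxD, hDO⟩ := hBs.exists_subset_of_mem_open hxO hO
    refine ⟨D, hBsc D hD, hxD, fun w hw => (hDO hw).1.1,
      fun w hw => interior_subset (hDO hw).1.2, ⟨z, hzC, fun h => (hDO h).2 rfl⟩⟩
  -- skolemized step function
  have step : ∀ n : ℕ, ∀ C : Set X, ∃ D : Set X,
      IsClopen C → x ∈ C → (IsClopen D ∧ x ∈ D ∧ D ⊆ C ∧ D ⊆ s n ∧ (C \ D).Nonempty) := by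
    intro n C
    by_cases h : IsClopen C ∧ x ∈ C
    · obtain ⟨D, hD⟩ := key C h.1 h.2 n
      exact ⟨D, fun _ _ => hD⟩
    · exact ⟨∅, fun h1 h2 => absurd ⟨h1, h2⟩ h⟩
  choose f hf using step
  set U : ℕ → Set X := fun n => Nat.rec univ (fun n C => f n C) n with hUdef
  have hU0 : U 0 = univ := rfl
  have hUsucc : ∀ n, U (n+1) = f n (U n) := fun n => rfl
  have base : ∀ n, IsClopen (U n) ∧ x ∈ U n := by
    intro n
    induction n with
    | zero => exact ⟨isClopen_univ, mem_univ x⟩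
    | succ n ih =>
      rw [hUsucc]
      obtain ⟨h1, h2, _⟩ := hf n (U n) ih.1 ih.2
      exact ⟨h1, h2⟩
  have spec : ∀ n, U (n+1) ⊆ U n ∧ U (n+1) ⊆ s n ∧ (U n \ U (n+1)).Nonempty := by
    intro n
    obtain ⟨_, _, h3, h4, h5⟩ := hf n (U n) (base n).1 (base n).2
    exact ⟨h3, h4, h5⟩
  refine ⟨U, hU0, fun n => (base n).1, fun n => (base n).2, fun n => (spec n).1,
    fun n => (spec n).2.2, ?_⟩
  intro W hW
  obtain ⟨n, hn⟩ := hs.mem_iff.mp hW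
  exact ⟨n + 1, fun w hw => hn ((spec n).2.1 hw)⟩

end Aux

/-- Every zero-dimensional separable metrizable strongly homogeneous space is homogeneous. -/
theorem statement4 (X : Type*) [TopologicalSpace X] [TopologicalSpace.MetrizableSpace X]
    [TopologicalSpace.SeparableSpace X]
    (hne : Nonempty X)
    (hzd : ∃ B : Set (Set X), TopologicalSpace.IsTopologicalBasis B ∧ ∀ U ∈ B, IsClopen U)
    (hsh : ∀ V : Set X, IsClopen V → V.Nonempty → Nonempty (V ≃ₜ X)) :
    ∀ x y : X, ∃ h : X ≃ₜ X, h x = y := by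
  classical
  intro x y
  by_cases hxy : x = y
  · exact ⟨Homeomorph.refl X, hxy⟩
  haveI hnt : Nontrivial X := ⟨x, y, hxy⟩
  -- no clopen set containing a point consists only of that point
  have hni : ∀ p : X, ∀ C : Set X, IsClopen C → p ∈ C → ∃ z ∈ C, z ≠ p := by
    intro p C hC hpC
    have e : C ≃ₜ X := (hsh C hC ⟨p, hpC⟩).some
    have : Nontrivial C := e.toEquiv.nontrivial
    obtain ⟨c₁, c₂, hcc⟩ := this
    by_cases h1 : (c₁ : X) = p
    · exact ⟨c₂, c₂.2, fun h2 => hcc (Subtype.ext (h1.trans h2.symm))⟩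
    · exact ⟨c₁, c₁.2, h1⟩
  obtain ⟨U, hU0, hUc, hUx, hUanti, hUne, hUb⟩ := exists_shrink hzd x (hni x)
  obtain ⟨V, hV0, hVc, hVy, hVanti, hVne, hVb⟩ := exists_shrink hzd y (hni y)
  have hUanti' : Antitone U := antitone_nat_of_succ_le hUanti
  have hVanti' : Antitone V := antitone_nat_of_succ_le hVanti
  set A : ℕ → Set X := fun n => U n \ U (n+1) with hA
  set B : ℕ → Set X := fun n => V n \ V (n+1) with hB
  -- generic facts about such annuli
  have disj : ∀ (W : ℕ → Set X), Antitone W → ∀ (z : X) (m n : ℕ),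
      z ∈ W m \ W (m+1) → z ∈ W n \ W (n+1) → m = n := by
    intro W hW z m n hm hn
    by_contra hne'
    rcases Nat.lt_or_ge m n with h | h
    · exact hm.2 (hW h hn.1)
    · exact hn.2 (hW (lt_of_le_of_ne h (Ne.symm hne')) hm.1)
  have cov : ∀ (p : X) (W : ℕ → Set X), W 0 = Set.univ →
      (∀ Wb ∈ nhds p, ∃ m, W m ⊆ Wb) → ∀ z : X, z ≠ p → ∃ n, z ∈ W n \ W (n+1) := by
    intro p W hW0 hWb z hz
    have : ∃ m, z ∉ W m := by
      obtain ⟨m, hm⟩ := hWb {z}ᶜ (isOpen_compl_singleton.mem_nhds (by simpa using Ne.symm hz))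
      exact ⟨m, fun h => hm h rfl⟩
    set k := Nat.find this with hkdef
    have hzk : z ∉ W k := Nat.find_spec this
    have hk0 : k ≠ 0 := fun h => hzk (by rw [h, hW0]; trivial)
    obtain ⟨j, hj⟩ := Nat.exists_eq_succ_of_ne_zero hk0
    have hjk : j < k := by omega
    have hzj : z ∈ W j := not_not.mp (Nat.find_min this hjk)
    exact ⟨j, hzj, by rw [← Nat.succ_eq_add_one, ← hj]; exact hzk⟩
  have covA : ∀ z : X, z ≠ x → ∃ n, z ∈ A n := cov x U hU0 hUb
  have covB : ∀ z : X, z ≠ y → ∃ n, z ∈ B n := cov y V hV0 hVb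
  have disjA : ∀ (z : X) (m n : ℕ), z ∈ A m → z ∈ A n → m = n := disj U hUanti'
  have disjB : ∀ (z : X) (m n : ℕ), z ∈ B m → z ∈ B n → m = n := disj V hVanti'
  have hxA : ∀ n, x ∉ A n := fun n h => h.2 (hUx (n+1))
  have hyB : ∀ n, y ∉ B n := fun n h => h.2 (hVy (n+1))
  have hAc : ∀ n, IsClopen (A n) := fun n => (hUc n).diff (hUc (n+1))
  have hBc : ∀ n, IsClopen (B n) := fun n => (hVc n).diff (hVc (n+1))
  have hUA : ∀ m (z : X), z ∈ U m → z = x ∨ ∃ n, m ≤ n ∧ z ∈ A n := by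
    intro m z hz
    by_cases hzx : z = x
    · exact Or.inl hzx
    · obtain ⟨n, hn⟩ := covA z hzx
      refine Or.inr ⟨n, ?_, hn⟩
      by_contra h
      exact hn.2 (hUanti' (Nat.succ_le_of_lt (Nat.lt_of_not_le h)) hz)
  have hVB : ∀ m (z : X), z ∈ V m → z = y ∨ ∃ n, m ≤ n ∧ z ∈ B n := by
    intro m z hz
    by_cases hzy : z = y
    · exact Or.inl hzy
    · obtain ⟨n, hn⟩ := covB z hzy
      refine Or.inr ⟨n, ?_, hn⟩
      by_contra h
      exact hn.2 (hVanti' (Nat.succ_le_of_lt (Nat.lt_of_not_le h)) hz)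
  have hBV : ∀ m n, m ≤ n → B n ⊆ V m := fun m n h w hw => hVanti' h hw.1
  have hAU : ∀ m n, m ≤ n → A n ⊆ U m := fun m n h w hw => hUanti' h hw.1
  -- the homeomorphisms between pieces
  have φ : ∀ n, (A n) ≃ₜ (B n) := fun n =>
    ((hsh (A n) (hAc n) (hUne n)).some).trans ((hsh (B n) (hBc n) (hVne n)).some).symm
  set h := pmapAux x y A B (fun n => φ n) covA with hh
  set g := pmapAux y x B A (fun n => (φ n).symm) covB with hg
  have hgh : ∀ z, g (h z) = z :=
    pmapAux_leftInverse covA covB disjA disjB hxA hyB (fun n a => (φ n).symm_apply_apply a)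
  have hhg : ∀ z, h (g z) = z :=
    pmapAux_leftInverse covB covA disjB disjA hyB hxA (fun n a => (φ n).apply_symm_apply a)
  have hcont : Continuous h :=
    pmapAux_continuous (U := U) (V := V) covA disjA hxA (fun n => (hAc n).2)
      (fun n => (φ n).continuous) (fun m => (hUc m).2.mem_nhds (hUx m)) hUA hBV hVb
  have gcont : Continuous g :=
    pmapAux_continuous (U := V) (V := U) covB disjB hyB (fun n => (hBc n).2)
      (fun n => (φ n).symm.continuous) (fun m => (hVc m).2.mem_nhds (hVy m)) hVB hAU hUb
  refine ⟨⟨⟨h, g, hgh, hhg⟩, hcont, gcont⟩, ?_⟩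
  exact pmapAux_self x y A B (fun n => φ n) covA
end

section
/- There exists (in ZFC) a subspace X of the Cantor space 2^ω of cardinality continuum such that the only homeomorphisms between 𝔠-crowded subspaces of X are identity maps; consequently, X is a zero-dimensional strongly 𝔠-hereditarily rigid space. -/
open Cardinal Set Filter Topology

/-- A subset `S` of a space `Z` is `𝔠`-crowded (as a subspace) if it is non-empty and every
non-empty relatively open subset of it has cardinality continuum. -/
def SetCCrowded {Z : Type*} [TopologicalSpace Z] (S : Set Z) : Prop :=
  S.Nonempty ∧ ∀ U : Set Z, IsOpen U → (U ∩ S).Nonempty →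
    Cardinal.mk (U ∩ S : Set Z) = Cardinal.continuum

namespace Stmt5Aux

abbrev Cs : Type := ℕ → Bool

/-- `ConvRel p x y`: some subsequence of first coordinates of `p` converges to `x`, and along
every subsequence of first coordinates converging to `x` the second coordinates converge
to `y`. -/
def ConvRel (p : ℕ → Cs × Cs) (x y : Cs) : Prop :=
  (∃ k : ℕ → ℕ, Tendsto (fun n => (p (k n)).1) atTop (𝓝 x)) ∧
  ∀ k : ℕ → ℕ, Tendsto (fun n => (p (k n)).1) atTop (𝓝 x) →
    Tendsto (fun n => (p (k n)).2) atTop (𝓝 y)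

theorem convRel_unique {p : ℕ → Cs × Cs} {x y₁ y₂ : Cs}
    (h1 : ConvRel p x y₁) (h2 : ConvRel p x y₂) : y₁ = y₂ := by
  obtain ⟨⟨k, hk⟩, hall1⟩ := h1
  exact tendsto_nhds_unique (hall1 k hk) (h2.2 k hk)

open Classical in
noncomputable def Fmap (p : ℕ → Cs × Cs) (x : Cs) : Cs :=
  if h : ∃ y, ConvRel p x y then h.choose else x

theorem Fmap_eq {p : ℕ → Cs × Cs} {x y : Cs} (h : ConvRel p x y) : Fmap p x = y := by
  have hex : ∃ y, ConvRel p x y := ⟨y, h⟩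
  classical
  rw [Fmap, dif_pos hex]
  exact convRel_unique hex.choose_spec h

noncomputable def Gmap (p : ℕ → Cs × Cs) : Cs → Cs := Fmap (fun n => (p n).swap)

/-- basic clopen cylinder -/
def cyl (z : Cs) (n : ℕ) : Set Cs := {y | ∀ i < n, y i = z i}

theorem mk_Cs : #Cs = 𝔠 := by
  rw [← Cardinal.power_def, Cardinal.mk_fintype, Cardinal.mk_nat]
  norm_num [Cardinal.two_power_aleph0]

theorem mk_cyl (z : Cs) (n : ℕ) : #(cyl z n) = 𝔠 := by
  apply le_antisymm
  · exact le_trans (Cardinal.mk_set_le _) mk_Cs.le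
  · rw [← mk_Cs]
    apply Cardinal.mk_le_of_injective (f := fun y =>
      (⟨fun i => if i < n then z i else (y : Cs) (i - n), fun i hi => if_pos hi⟩ : cyl z n))
    intro a b hab
    have h2 := congrArg Subtype.val hab
    ext j
    have := congrFun h2 (j + n)
    simpa using this

theorem exists_cyl_subset {U : Set Cs} (hU : IsOpen U) {z : Cs} (hz : z ∈ U) :
    ∃ n, cyl z n ⊆ U := by
  obtain ⟨I, u, hu, hsub⟩ := isOpen_pi_iff.mp hU z hz
  rcases I.bddAbove with ⟨m, hm⟩
  refine ⟨m + 1, fun y hy => hsub ?_⟩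
  intro i hi
  have : y i = z i := hy i (Nat.lt_succ_of_le (hm hi))
  rw [this]; exact (hu i hi).2

abbrev Oo : Type := (Cardinal.continuum.ord).ToType
abbrev Jj : Type := (ℕ → Cs × Cs) × (Cs × ℕ)

theorem mk_Oo : #Oo = 𝔠 := by rw [Cardinal.mk_toType, Cardinal.card_ord]

theorem mk_seq : #(ℕ → Cs × Cs) = 𝔠 := by
  rw [← Cardinal.power_def, Cardinal.mk_prod, Cardinal.mk_nat]
  simp [mk_Cs, Cardinal.continuum_mul_self, Cardinal.continuum_power_aleph0]

theorem mk_OJ : #(Oo × Jj) = 𝔠 := by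
  rw [Cardinal.mk_prod, Cardinal.mk_prod, Cardinal.mk_prod, Cardinal.mk_nat]
  simp [mk_Cs, mk_Oo, mk_seq, Cardinal.continuum_mul_self,
    Cardinal.mul_eq_self, Cardinal.aleph0_le_continuum,
    Cardinal.continuum_mul_aleph0]

noncomputable def eqv : Oo ≃ Oo × Jj :=
  Classical.choice (Cardinal.eq.mp (mk_Oo.trans mk_OJ.symm))

noncomputable def Pseq (i : Oo) : ℕ → Cs × Cs := (eqv i).2.1
noncomputable def Lcyl (i : Oo) : Cs × ℕ := (eqv i).2.2

theorem mk_Iic_lt (i : Oo) : #(Iic i) < 𝔠 := by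
  have h1 : #(Iio i) < 𝔠 := Cardinal.mk_Iio_ord_toType i
  have h2 : (Iic i : Set Oo) = insert i (Iio i) := by
    ext x; simp [le_iff_lt_or_eq, or_comm]
  rw [h2]
  calc #(insert i (Iio i) : Set Oo) ≤ #(Iio i) + 1 := Cardinal.mk_insert_le
  _ < 𝔠 := Cardinal.add_lt_of_lt Cardinal.aleph0_le_continuum h1
      (lt_of_lt_of_le Cardinal.one_lt_aleph0 Cardinal.aleph0_le_continuum)

instance : Nonempty Oo := by
  rw [Ordinal.toType_nonempty_iff_ne_zero, ne_eq, Cardinal.ord_eq_zero]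
  exact Cardinal.continuum_ne_zero

theorem surj_Pseq : Function.Surjective Pseq := by
  intro p
  exact ⟨eqv.symm ⟨Classical.arbitrary Oo, p, Classical.arbitrary _⟩, by simp [Pseq]⟩

/-- the forbidden set at stage `i`, given the set `A` of previously chosen points -/
def Bad (i : Oo) (A : Set Cs) : Set Cs :=
  A ∪ (⋃ j ∈ Iio i, Fmap (Pseq j) '' A) ∪ (⋃ j ∈ Iio i, Gmap (Pseq j) '' A)

theorem mk_Bad_lt (i : Oo) (A : Set Cs) (hA : #A < 𝔠) : #(Bad i A) < 𝔠 := by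
  have hμ : #(Iio i) < 𝔠 := Cardinal.mk_Iio_ord_toType i
  have hb : ∀ g : Oo → Cs → Cs, #(⋃ j ∈ Iio i, g j '' A) < 𝔠 := by
    intro g
    calc #(⋃ j ∈ Iio i, g j '' A) ≤ #(Iio i) * ⨆ j : Iio i, #(g j '' A) :=
          Cardinal.mk_biUnion_le _ _
      _ ≤ #(Iio i) * #A := by
          gcongr
          exact ciSup_le' fun j => Cardinal.mk_image_le
      _ < 𝔠 := Cardinal.mul_lt_of_lt Cardinal.aleph0_le_continuum hμ hA
  calc #(Bad i A)
      ≤ #(A ∪ (⋃ j ∈ Iio i, Fmap (Pseq j) '' A) : Set Cs) + #(⋃ j ∈ Iio i, Gmap (Pseq j) '' A) :=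
        Cardinal.mk_union_le _ _
    _ ≤ #A + #(⋃ j ∈ Iio i, Fmap (Pseq j) '' A) + #(⋃ j ∈ Iio i, Gmap (Pseq j) '' A) := by
        gcongr; exact Cardinal.mk_union_le _ _
    _ < 𝔠 := by
        apply Cardinal.add_lt_of_lt Cardinal.aleph0_le_continuum _ (hb _)
        exact Cardinal.add_lt_of_lt Cardinal.aleph0_le_continuum hA (hb _)

theorem exists_pt (i : Oo) (A : Set Cs) (hA : #A < 𝔠) :
    ∃ y, y ∈ cyl (Lcyl i).1 (Lcyl i).2 ∧ y ∉ Bad i A := by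
  by_contra hcon
  push_neg at hcon
  have := (Cardinal.mk_le_mk_of_subset hcon).trans_lt (mk_Bad_lt i A hA)
  rw [mk_cyl] at this
  exact absurd this (lt_irrefl _)

noncomputable def pt : Oo → Cs :=
  (wellFounded_lt (α := Oo)).fix fun i ih =>
    (exists_pt i (range fun j : Iio i => ih j j.2)
      (lt_of_le_of_lt Cardinal.mk_range_le (Cardinal.mk_Iio_ord_toType i))).choose

theorem pt_spec (i : Oo) :
    pt i ∈ cyl (Lcyl i).1 (Lcyl i).2 ∧ pt i ∉ Bad i (pt '' Iio i) := by
  have heq : pt i = (exists_pt i (range fun j : Iio i => pt j)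
      (lt_of_le_of_lt Cardinal.mk_range_le (Cardinal.mk_Iio_ord_toType i))).choose := by
    unfold pt
    exact (wellFounded_lt (α := Oo)).fix_eq _ i
  have hspec := (exists_pt i (range fun j : Iio i => pt j)
      (lt_of_le_of_lt Cardinal.mk_range_le (Cardinal.mk_Iio_ord_toType i))).choose_spec
  rw [← heq] at hspec
  rwa [show (range fun j : Iio i => pt j) = pt '' Iio i from (Set.image_eq_range _ _).symm]
    at hspec

theorem pt_notMem (i : Oo) : pt i ∉ pt '' Iio i := by
  intro hmem
  exact (pt_spec i).2 (Or.inl (Or.inl hmem))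

theorem pt_inj : Function.Injective pt := by
  intro a b hab
  by_contra hne
  rcases lt_or_gt_of_ne hne with h | h
  · exact pt_notMem b ⟨a, h, hab⟩
  · exact pt_notMem a ⟨b, h, hab.symm⟩

theorem pt_not_F (i j : Oo) (hj : j < i) : pt i ∉ Fmap (Pseq j) '' (pt '' Iio i) := by
  intro hmem
  exact (pt_spec i).2 (Or.inl (Or.inr (Set.mem_biUnion hj hmem)))

theorem pt_not_G (i j : Oo) (hj : j < i) : pt i ∉ Gmap (Pseq j) '' (pt '' Iio i) := by
  intro hmem
  exact (pt_spec i).2 (Or.inr (Set.mem_biUnion hj hmem))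

/-- The constructed set. -/
noncomputable def Xset : Set Cs := range pt

theorem kill {α β γ : Oo} (h1 : pt γ = Fmap (Pseq α) (pt β))
    (h2 : pt β = Gmap (Pseq α) (pt γ)) (hne : pt β ≠ pt γ) : β ≤ α := by
  have hβγ : β ≠ γ := fun h => hne (by rw [h])
  rcases lt_or_gt_of_ne hβγ with h | h
  · -- β < γ : if α < β then α < γ and stage γ was forbidden to hit Fmap images
    by_contra hba
    push_neg at hba
    exact pt_not_F γ α (lt_trans hba h) ⟨pt β, ⟨β, h, rfl⟩, h1.symm⟩
  · -- γ < β
    by_contra hba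
    push_neg at hba
    exact pt_not_G β α hba ⟨pt γ, ⟨γ, h, rfl⟩, h2.symm⟩

theorem small_moved (p : ℕ → Cs × Cs) :
    #{z : Cs | z ∈ Xset ∧ Fmap p z ∈ Xset ∧ Gmap p (Fmap p z) = z ∧ Fmap p z ≠ z} < 𝔠 := by
  obtain ⟨α, hα⟩ := surj_Pseq p
  have hsub : {z : Cs | z ∈ Xset ∧ Fmap p z ∈ Xset ∧ Gmap p (Fmap p z) = z ∧ Fmap p z ≠ z}
      ⊆ pt '' Iic α := by
    rintro z ⟨⟨β, hβ⟩, ⟨γ, hγ⟩, hG, hne⟩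
    subst hβ
    have hβα : β ≤ α := by
      apply kill (α := α) (β := β) (γ := γ)
      · rw [hα, hγ]
      · rw [hα, hγ, hG]
      · rw [hγ]; exact fun hc => hne (by rw [← hc])
    exact ⟨β, hβα, rfl⟩
  calc #{z : Cs | z ∈ Xset ∧ Fmap p z ∈ Xset ∧ Gmap p (Fmap p z) = z ∧ Fmap p z ≠ z}
      ≤ #(pt '' Iic α) := Cardinal.mk_le_mk_of_subset hsub
    _ ≤ #(Iic α) := Cardinal.mk_image_le
    _ < 𝔠 := mk_Iic_lt α

theorem mk_inter_cyl (z : Cs) (n : ℕ) : 𝔠 ≤ #(cyl z n ∩ Xset : Set Cs) := by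
  rw [← mk_Oo]
  have hmem : ∀ i : Oo, pt (eqv.symm ⟨i, Classical.arbitrary _, (z, n)⟩) ∈ cyl z n ∩ Xset := by
    intro i
    constructor
    · have h1 := (pt_spec (eqv.symm ⟨i, Classical.arbitrary _, (z, n)⟩)).1
      have h2 : Lcyl (eqv.symm ⟨i, Classical.arbitrary _, (z, n)⟩) = (z, n) := by
        simp [Lcyl]
      rwa [h2] at h1
    · exact ⟨_, rfl⟩
  apply Cardinal.mk_le_of_injective (f := fun i =>
    (⟨pt (eqv.symm ⟨i, Classical.arbitrary _, (z, n)⟩), hmem i⟩ : (cyl z n ∩ Xset : Set Cs)))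
  intro a b hab
  have := pt_inj (congrArg Subtype.val hab)
  have := eqv.symm.injective this
  exact congrArg Prod.fst this

theorem mk_Xset : #Xset = 𝔠 := by
  rw [Xset, Cardinal.mk_range_eq pt pt_inj, mk_Oo]

theorem crowded_Xset : SetCCrowded Xset := by
  constructor
  · exact Set.range_nonempty pt
  · intro U hU hne
    apply le_antisymm
    · exact le_trans (Cardinal.mk_set_le _) mk_Cs.le
    · obtain ⟨z, hzU, hzX⟩ := hne
      obtain ⟨n, hn⟩ := exists_cyl_subset hU hzU
      refine le_trans (mk_inter_cyl z n) (Cardinal.mk_le_mk_of_subset ?_)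
      exact fun y ⟨hy1, hy2⟩ => ⟨hn hy1, hy2⟩

theorem conv_forward {S T : Set Cs} (h : S ≃ₜ T) (d : ℕ → S) (hd : DenseRange d)
    (s : S) : ConvRel (fun n => ((d n : Cs), (h (d n) : Cs))) (s : Cs) (h s : Cs) := by
  constructor
  · have hs : (s : Cs) ∈ closure (Set.range fun n => (d n : Cs)) := by
      have h1 : (s : S) ∈ closure (range d) := hd s
      have h2 : (s : Cs) ∈ closure (Subtype.val '' range d) :=
        image_closure_subset_closure_image continuous_subtype_val ⟨s, h1, rfl⟩
      rwa [← Set.range_comp] at h2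
    obtain ⟨u, hu, hlim⟩ := mem_closure_iff_seq_limit.mp hs
    choose k hk using hu
    refine ⟨k, ?_⟩
    have : (fun n => (d (k n) : Cs)) = u := funext hk
    simpa [this] using hlim
  · intro k hk
    have h1 : Tendsto (fun n => d (k n)) atTop (𝓝 s) := tendsto_subtype_rng.mpr hk
    have h2 : Tendsto (fun n => h (d (k n))) atTop (𝓝 (h s)) :=
      ((h.continuous.tendsto s).comp h1)
    exact tendsto_subtype_rng.mp h2

end Stmt5Aux

open Stmt5Aux

/-- There is (in ZFC) a subspace `X` of the Cantor space of cardinality continuum, itself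
`𝔠`-crowded, such that the only homeomorphisms between `𝔠`-crowded subspaces of `X` are
identity maps; i.e. `X` is a zero-dimensional strongly `𝔠`-hereditarily rigid space. -/
theorem statement5 :
    ∃ X : Set (ℕ → Bool), Cardinal.mk X = Cardinal.continuum ∧ SetCCrowded X ∧
      ∀ S T : Set (ℕ → Bool), S ⊆ X → T ⊆ X → SetCCrowded S → SetCCrowded T →
        ∀ h : S ≃ₜ T, S = T ∧ ∀ a : S, ((h a : ℕ → Bool)) = (a : ℕ → Bool) := by
  refine ⟨Xset, mk_Xset, crowded_Xset, ?_⟩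
  intro S T hSX hTX hS hT h
  have key : ∀ a : S, ((h a : Cs)) = (a : Cs) := by
    by_contra hcon
    push_neg at hcon
    obtain ⟨a₀, ha₀⟩ := hcon
    obtain ⟨m, hm⟩ := Function.ne_iff.mp ha₀
    haveI : Nonempty S := hS.1.to_subtype
    obtain ⟨d, hd⟩ := TopologicalSpace.exists_dense_seq S
    set p : ℕ → Cs × Cs := fun n => ((d n : Cs), (h (d n) : Cs)) with hp
    have hF : ∀ s : S, Fmap p (s : Cs) = (h s : Cs) := fun s => Fmap_eq (conv_forward h d hd s)
    have hd' : DenseRange fun n => h (d n) :=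
      DenseRange.comp h.surjective.denseRange hd h.continuous
    have hG : ∀ t : T, Gmap p (t : Cs) = (h.symm t : Cs) := by
      intro t
      have hc := conv_forward h.symm (fun n => h (d n)) hd' t
      have heq : (fun n => (((h (d n)) : Cs), ((h.symm (h (d n))) : Cs)))
          = fun n => (p n).swap := by
        funext n
        simp [hp]
      rw [heq] at hc
      show Fmap (fun n => (p n).swap) (t : Cs) = (h.symm t : Cs)
      exact Fmap_eq hc
    set A : Set S := {s : S | (h s : Cs) m ≠ (s : Cs) m} with hA
    have hAopen : IsOpen A := by
      have hc1 : Continuous fun s : S => (h s : Cs) m :=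
        (continuous_apply m).comp (continuous_subtype_val.comp h.continuous)
      have hc2 : Continuous fun s : S => (s : Cs) m :=
        (continuous_apply m).comp continuous_subtype_val
      exact (isClosed_eq hc1 hc2).isOpen_compl
    obtain ⟨U, hUopen, hUA⟩ := isOpen_induced_iff.mp hAopen
    have ha₀A : a₀ ∈ A := hm
    have hmem : (U ∩ S).Nonempty := by
      refine ⟨a₀, ?_, a₀.2⟩
      have : a₀ ∈ Subtype.val ⁻¹' U := by rw [hUA]; exact ha₀A
      exact this
    have hcard : #(U ∩ S : Set Cs) = 𝔠 := hS.2 U hUopen hmem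
    have hsub : (U ∩ S : Set Cs) ⊆
        {z : Cs | z ∈ Xset ∧ Fmap p z ∈ Xset ∧ Gmap p (Fmap p z) = z ∧ Fmap p z ≠ z} := by
      rintro z ⟨hzU, hzS⟩
      set s : S := ⟨z, hzS⟩ with hs
      have hsA : s ∈ A := by
        have : s ∈ Subtype.val ⁻¹' U := hzU
        rwa [hUA] at this
      have hFz : Fmap p z = (h s : Cs) := hF s
      refine ⟨hSX hzS, ?_, ?_, ?_⟩
      · rw [hFz]; exact hTX (h s).2
      · rw [hFz, hG (h s), Homeomorph.symm_apply_apply]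
      · rw [hFz]
        intro hc
        exact hsA (congrFun hc m)
    have := (Cardinal.mk_le_mk_of_subset hsub).trans_lt (small_moved p)
    rw [hcard] at this
    exact absurd this (lt_irrefl _)
  refine ⟨?_, key⟩
  apply Set.Subset.antisymm
  · intro s hs
    have h1 := key ⟨s, hs⟩
    have h2 := (h ⟨s, hs⟩).2
    rw [h1] at h2
    exact h2
  · intro t ht
    have h1 := key (h.symm ⟨t, ht⟩)
    rw [Homeomorph.apply_symm_apply] at h1
    have h2 := (h.symm ⟨t, ht⟩).2
    rw [← h1] at h2
    exact h2
end

section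
/- There exists (in ZFC) a zero-dimensional separable metrizable space that is not σ-homogeneous, i.e., cannot be written as a countable union of homogeneous subspaces. -/
open Cardinal Filter Topology Set TopologicalSpace

abbrev Ca := ℕ → Bool
abbrev Code := ((ℕ → Ca) × (ℕ → Ca)) × ((ℕ → Ca) × (ℕ → Ca))
open Classical in
noncomputable def gfun (d e : ℕ → Ca) : Ca → Ca := fun z =>
  if h : ∃ n, d n = z then e h.choose else z
noncomputable def ext (d e : ℕ → Ca) (x : Ca) : Ca :=
  limUnder (𝓝[Set.range d] x) (gfun d e)
noncomputable def Gm (c : Code) : Ca → Ca := ext c.1.1 c.1.2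
noncomputable def Gm' (c : Code) : Ca → Ca := ext c.2.1 c.2.2
def Sm (c : Code) : Set Ca := {x | Gm c x ≠ x ∧ Gm' c (Gm c x) = x}
lemma injOn_Sm (c : Code) : Set.InjOn (Gm c) (Sm c) := fun a ha b hb h => by
  rw [← ha.2, ← hb.2, h]
lemma mk_Ca : #Ca = continuum := by simp [Cardinal.mk_arrow]
noncomputable abbrev kappa : Type := (Cardinal.continuum.{0}).ord.ToType
lemma mk_kappa : #kappa = continuum := Cardinal.mk_ord_toType _
instance : Nonempty kappa := by
  rw [Ordinal.toType_nonempty_iff_ne_zero]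
  simp [Cardinal.ord_eq_zero]
  exact Cardinal.continuum_ne_zero

/-- the bad set at stage `γ` given prior points `P`. -/
def Bad (E : kappa → Code) (γ : kappa) (P : Set Ca) : Set Ca :=
  P ∪ ⋃ β ∈ Set.Iic γ,
    (Gm (E β) '' (P ∩ Sm (E β)) ∪ {z ∈ Sm (E β) | Gm (E β) z ∈ P})

lemma mk_Iic_lt (γ : kappa) : #(Set.Iic γ) < continuum := by
  have h1 : (Set.Iic γ) = insert γ (Set.Iio γ) := by
    ext x; simp [le_iff_lt_or_eq, or_comm]
  rw [h1]
  calc #(insert γ (Set.Iio γ) : Set kappa) ≤ #(Set.Iio γ) + 1 := Cardinal.mk_insert_le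
    _ < continuum := by
        have := Cardinal.mk_Iio_ord_toType γ
        have h2 : (1 : Cardinal) < continuum := by
          exact lt_of_lt_of_le one_lt_aleph0 Cardinal.aleph0_le_continuum
        exact Cardinal.add_lt_of_lt Cardinal.aleph0_le_continuum this h2

lemma mk_Bad_lt (E : kappa → Code) (γ : kappa) (P : Set Ca) (hP : #P < continuum) :
    #(Bad E γ P) < continuum := by
  have hIic := _root_.mk_Iic_lt γ
  have hpieces : ∀ β : kappa,
      #((Gm (E β) '' (P ∩ Sm (E β)) ∪ {z ∈ Sm (E β) | Gm (E β) z ∈ P} : Set Ca)) ≤ #P + #P := by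
    intro β
    have h1 : #(Gm (E β) '' (P ∩ Sm (E β)) : Set Ca) ≤ #P :=
      Cardinal.mk_image_le.trans (Cardinal.mk_le_mk_of_subset Set.inter_subset_left)
    have h2 : #({z ∈ Sm (E β) | Gm (E β) z ∈ P} : Set Ca) ≤ #P := by
      refine Cardinal.mk_le_of_injective (f := fun z =>
        (⟨Gm (E β) z.1, z.2.2⟩ : P)) ?_
      rintro ⟨a, ha⟩ ⟨b, hb⟩ hab
      simp only [Subtype.mk.injEq] at hab ⊢
      exact injOn_Sm (E β) ha.1 hb.1 hab
    exact (Cardinal.mk_union_le _ _).trans (add_le_add h1 h2)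
  refine lt_of_le_of_lt (Cardinal.mk_union_le _ _) (Cardinal.add_lt_of_lt
    Cardinal.aleph0_le_continuum hP ?_)
  have hb := Cardinal.mk_biUnion_le (ι := kappa)
    (fun β => (Gm (E β) '' (P ∩ Sm (E β)) ∪ {z ∈ Sm (E β) | Gm (E β) z ∈ P} : Set Ca))
    (Set.Iic γ)
  refine lt_of_le_of_lt hb ?_
  refine Cardinal.mul_lt_of_lt Cardinal.aleph0_le_continuum hIic ?_
  refine lt_of_le_of_lt (ciSup_le' fun β => hpieces β.1) ?_
  exact Cardinal.add_lt_of_lt Cardinal.aleph0_le_continuum hP hP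

lemma exists_good (E : kappa → Code) (γ : kappa) (P : Set Ca) (hP : #P < continuum) :
    ∃ x : Ca, x ∉ Bad E γ P := by
  by_contra h
  push_neg at h
  have : Bad E γ P = Set.univ := Set.eq_univ_of_forall h
  have h2 := mk_Bad_lt E γ P hP
  rw [this] at h2
  simp [mk_Ca] at h2

def prevSet (γ : kappa) (f : ∀ β : kappa, β < γ → Ca) : Set Ca :=
  {z | ∃ β, ∃ h : β < γ, f β h = z}

lemma mk_prevSet_lt (γ : kappa) (f : ∀ β : kappa, β < γ → Ca) :
    #(prevSet γ f) < continuum := by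
  refine lt_of_le_of_lt ?_ (Cardinal.mk_Iio_ord_toType γ)
  refine Cardinal.mk_le_of_surjective (f := fun β : Set.Iio γ =>
    (⟨f β.1 β.2, β.1, β.2, rfl⟩ : prevSet γ f)) ?_
  rintro ⟨z, β, hβ, rfl⟩
  exact ⟨⟨β, hβ⟩, rfl⟩

noncomputable def pt (E : kappa → Code) : kappa → Ca :=
  (IsWellFounded.wf (r := ((· < ·) : kappa → kappa → Prop))).fix
    (fun γ ih => (exists_good E γ (prevSet γ ih) (mk_prevSet_lt γ ih)).choose)

lemma pt_spec (E : kappa → Code) (γ : kappa) :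
    pt E γ ∉ Bad E γ (pt E '' Set.Iio γ) := by
  have himg : prevSet γ (fun β _ => pt E β) = pt E '' Set.Iio γ := by
    ext z
    simp [prevSet, Set.mem_image, Set.mem_Iio]
  have h := WellFounded.fix_eq (IsWellFounded.wf (r := ((· < ·) : kappa → kappa → Prop)))
    (fun γ ih => (exists_good E γ (prevSet γ ih) (mk_prevSet_lt γ ih)).choose) γ
  rw [← himg]
  rw [show pt E γ = (exists_good E γ (prevSet γ (fun β _ => pt E β))
    (mk_prevSet_lt γ (fun β _ => pt E β))).choose from h]
  exact (exists_good E γ (prevSet γ (fun β _ => pt E β))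
    (mk_prevSet_lt γ (fun β _ => pt E β))).choose_spec

lemma pt_inj (E : kappa → Code) : Function.Injective (pt E) := by
  intro β γ h
  by_contra hne
  rcases lt_or_gt_of_ne hne with hlt | hlt
  · exact pt_spec E γ (Set.mem_union_left _ ⟨β, hlt, h⟩)
  · exact pt_spec E β (Set.mem_union_left _ ⟨γ, hlt, h.symm⟩)

/-- the set of "bad pairs" for a code `c` realized inside `X = range (pt E)`. -/
def Kset (E : kappa → Code) (c : Code) : Set Ca :=
  {z | z ∈ Set.range (pt E) ∧ z ∈ Sm c ∧ Gm c z ∈ Set.range (pt E)}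

lemma Kset_min_lt (E : kappa → Code) (α : kappa) {z : Ca} (hz : z ∈ Kset E (E α))
    {γ δ : kappa} (hγ : pt E γ = z) (hδ : pt E δ = Gm (E α) z) : γ < α ∨ δ < α := by
  by_contra hcon
  push_neg at hcon
  obtain ⟨hαγ, hαδ⟩ := hcon
  have hne : γ ≠ δ := by
    intro h
    apply hz.2.1.1
    rw [← hδ, ← h, hγ]
  rcases lt_or_gt_of_ne hne with hlt | hlt
  · -- γ < δ : pt δ = Gm (E α) (pt γ) forbidden at stage δ
    apply pt_spec E δ
    refine Set.mem_union_right _ ?_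
    refine Set.mem_biUnion hαδ ?_
    refine Set.mem_union_left _ ?_
    exact ⟨z, ⟨⟨γ, hlt, hγ⟩, hz.2.1⟩, hδ.symm⟩
  · -- δ < γ : pt γ ∈ Sm with image already present, forbidden at stage γ
    apply pt_spec E γ
    refine Set.mem_union_right _ ?_
    refine Set.mem_biUnion hαγ ?_
    refine Set.mem_union_right _ ?_
    refine ⟨by rw [hγ]; exact hz.2.1, ?_⟩
    rw [hγ]
    exact ⟨δ, hlt, hδ⟩

lemma mk_Kset_lt (E : kappa → Code) (α : kappa) : #(Kset E (E α)) < continuum := by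
  classical
  have hinj : ∀ z : Kset E (E α), ∃ p : Set.Iio α × Bool,
      (p.2 = true ∧ pt E p.1.1 = z.1) ∨ (p.2 = false ∧ pt E p.1.1 = Gm (E α) z.1) := by
    rintro ⟨z, hz⟩
    obtain ⟨γ, hγ⟩ := hz.1
    obtain ⟨δ, hδ⟩ := hz.2.2
    rcases Kset_min_lt E α hz hγ hδ with h | h
    · exact ⟨(⟨γ, h⟩, true), Or.inl ⟨rfl, hγ⟩⟩
    · exact ⟨(⟨δ, h⟩, false), Or.inr ⟨rfl, hδ⟩⟩
  choose F hF using hinj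
  have hFinj : Function.Injective F := by
    rintro ⟨a, ha⟩ ⟨b, hb⟩ hab
    have h1 := hF ⟨a, ha⟩
    have h2 := hF ⟨b, hb⟩
    rw [hab] at h1
    ext1
    rcases h1 with ⟨e1, v1⟩ | ⟨e1, v1⟩ <;> rcases h2 with ⟨e2, v2⟩ | ⟨e2, v2⟩
    · exact v1 ▸ v2 ▸ rfl
    · rw [e1] at e2; exact absurd e2 (by simp)
    · rw [e1] at e2; exact absurd e2 (by simp)
    · exact injOn_Sm (E α) ha.2.1 hb.2.1 (v1 ▸ v2 ▸ rfl)
  refine lt_of_le_of_lt (Cardinal.mk_le_of_injective hFinj) ?_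
  rw [Cardinal.mk_prod]
  simp only [Cardinal.lift_id]
  refine Cardinal.mul_lt_of_lt Cardinal.aleph0_le_continuum
    (Cardinal.mk_Iio_ord_toType α) ?_
  exact lt_of_lt_of_le (by simp) Cardinal.aleph0_le_continuum

lemma homog_open_big {Y : Set Ca} (hY : #Y = continuum) (hhom : IsHomogeneousSpace Y)
    {U : Set Ca} (hU : IsOpen U) (hne : (U ∩ Y).Nonempty) :
    #(U ∩ Y : Set Ca) = continuum := by
  obtain ⟨b, hbc, hbne, hbasis⟩ := exists_countable_basis Ca
  set T : Set (Set Ca) := {B ∈ b | (B ∩ Y).Nonempty} with hT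
  -- T is nonempty
  have hYne : Y.Nonempty := by
    rw [Set.nonempty_iff_ne_empty]
    intro h
    rw [h] at hY
    simp at hY
    exact Cardinal.continuum_ne_zero hY.symm
  obtain ⟨p0, hp0⟩ := hYne
  obtain ⟨B1, hB1b, hB1p, -⟩ := hbasis.exists_subset_of_mem_open (Set.mem_univ p0) isOpen_univ
  have hTne : T.Nonempty := ⟨B1, hB1b, ⟨p0, hB1p, hp0⟩⟩
  -- minimal cardinal of a trace
  set S0 : Set Cardinal := (fun B => #(B ∩ Y : Set Ca)) '' T with hS0
  obtain ⟨κ0, hκ0S, hκ0min⟩ := Cardinal.lt_wf.has_min S0 (hTne.image _)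
  obtain ⟨B0, hB0T, hB0κ⟩ := hκ0S
  obtain ⟨p, hpB0, hpY⟩ := hB0T.2
  -- every point of Y has a small basic neighborhood
  have huniv : ∀ q ∈ Y, ∃ B ∈ b, q ∈ B ∧ #(B ∩ Y : Set Ca) ≤ κ0 := by
    intro q hq
    obtain ⟨h, hh⟩ := hhom ⟨p, hpY⟩ ⟨q, hq⟩
    set V : Set Y := Subtype.val ⁻¹' B0 with hV
    have hVopen : IsOpen V := (hbasis.isOpen hB0T.1).preimage continuous_subtype_val
    have hW : IsOpen (h.symm ⁻¹' V) := hVopen.preimage h.symm.continuous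
    obtain ⟨U', hU'open, hU'⟩ := isOpen_induced_iff.mp hW
    have hqU' : q ∈ U' := by
      have : (⟨q, hq⟩ : Y) ∈ h.symm ⁻¹' V := by
        simp only [Set.mem_preimage, hV]
        rw [← hh, Homeomorph.symm_apply_apply]
        exact hpB0
      rw [← hU'] at this
      exact this
    obtain ⟨B, hBb, hqB, hBU'⟩ := hbasis.exists_subset_of_mem_open hqU' hU'open
    refine ⟨B, hBb, hqB, ?_⟩
    rw [← hB0κ]
    refine Cardinal.mk_le_of_injective (f := fun z : (B ∩ Y : Set Ca) =>
      (⟨(h.symm ⟨z.1, z.2.2⟩ : Y).1, ?_, (h.symm ⟨z.1, z.2.2⟩).2⟩ : (B0 ∩ Y : Set Ca))) ?_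
    · have hmem : (⟨z.1, z.2.2⟩ : Y) ∈ h.symm ⁻¹' V := by
        rw [← hU']
        exact hBU' z.2.1
      exact hmem
    · rintro ⟨a, ha⟩ ⟨c, hc⟩ hac
      simp only [Subtype.mk.injEq] at hac ⊢
      have : h.symm ⟨a, ha.2⟩ = h.symm ⟨c, hc.2⟩ := Subtype.ext (by have := congrArg Subtype.val hac; exact this)
      have := h.symm.injective this
      exact congrArg Subtype.val this
  -- κ0 must be continuum
  have hκ0big : continuum ≤ κ0 := by
    classical
    set b' : Set (Set Ca) := {B ∈ b | #(B ∩ Y : Set Ca) ≤ κ0} with hb'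
    have hcover : Y ⊆ ⋃ B ∈ b', (B ∩ Y : Set Ca) := by
      intro q hq
      obtain ⟨B, hBb, hqB, hBκ⟩ := huniv q hq
      exact Set.mem_biUnion ⟨hBb, hBκ⟩ ⟨hqB, hq⟩
    have h1 : continuum ≤ #(⋃ B ∈ b', (B ∩ Y : Set Ca)) := by
      rw [← hY]
      exact Cardinal.mk_le_mk_of_subset hcover
    have h2 : #(⋃ B ∈ b', (B ∩ Y : Set Ca)) ≤ ℵ₀ * κ0 := by
      refine (Cardinal.mk_biUnion_le _ _).trans ?_
      refine mul_le_mul' ?_ (ciSup_le' fun B => B.2.2)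
      exact (hbc.mono (Set.sep_subset _ _)).le_aleph0
    have h3 : continuum ≤ ℵ₀ * κ0 := h1.trans h2
    by_contra hcon
    push_neg at hcon
    have h4 : ℵ₀ * κ0 < continuum := by
      exact Cardinal.mul_lt_of_lt Cardinal.aleph0_le_continuum
        Cardinal.aleph0_lt_continuum hcon
    exact absurd (h3.trans_lt h4) (lt_irrefl _)
  -- conclude
  obtain ⟨q, hqU, hqY⟩ := hne
  obtain ⟨B, hBb, hqB, hBU⟩ := hbasis.exists_subset_of_mem_open hqU hU
  have hBT : B ∈ T := ⟨hBb, ⟨q, hqB, hqY⟩⟩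
  have hmin := hκ0min #(B ∩ Y : Set Ca) ⟨B, hBT, rfl⟩
  push_neg at hmin
  have hsub : (B ∩ Y : Set Ca) ⊆ (U ∩ Y) := fun z hz => ⟨hBU hz.1, hz.2⟩
  refine le_antisymm (le_trans (Cardinal.mk_le_mk_of_subset Set.inter_subset_right)
    (le_of_eq hY)) ?_
  exact hκ0big.trans (hmin.trans (Cardinal.mk_le_mk_of_subset hsub))

-- master limit lemma (from t2)
lemma ext_eq {Y : Set Ca} (f : C(Y, Y)) (d : ℕ → Y) (hd : DenseRange d)
    (e : ℕ → Ca) (he : ∀ n, e n = (f (d n) : Ca)) (y : Ca) (hy : y ∈ Y) :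
    ext (fun n => (d n : Ca)) e y = (f ⟨y, hy⟩ : Ca) := by
  set dv : ℕ → Ca := fun n => (d n : Ca) with hdv
  have hrange : Set.range dv = Subtype.val '' Set.range d := by
    rw [← Set.range_comp]; rfl
  have hyc : y ∈ closure (Set.range dv) := by
    rw [hrange]
    have h1 : Subtype.val '' closure (Set.range d) ⊆ closure (Subtype.val '' Set.range d) :=
      image_closure_subset_closure_image continuous_subtype_val
    exact h1 (by rw [hd.closure_range]; exact ⟨⟨y, hy⟩, Set.mem_univ _, rfl⟩)
  have hne : (𝓝[Set.range dv] y).NeBot := mem_closure_iff_nhdsWithin_neBot.mp hyc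
  have hagree : ∀ z ∈ Set.range dv, ∀ (hz : z ∈ Y), gfun dv e z = (f ⟨z, hz⟩ : Ca) := by
    rintro z ⟨m, rfl⟩ hz
    have hex : ∃ n, dv n = dv m := ⟨m, rfl⟩
    rw [gfun, dif_pos hex]
    rw [he]
    congr 1
    have : d hex.choose = d m := Subtype.ext hex.choose_spec
    rw [this]
  have key : Tendsto (gfun dv e) (𝓝[Set.range dv] y) (𝓝 (f ⟨y, hy⟩ : Ca)) := by
    rw [hrange, ← Topology.IsEmbedding.subtypeVal.map_nhdsWithin_eq (Set.range d) ⟨y, hy⟩,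
      Filter.tendsto_map'_iff]
    have hcont : Tendsto (fun w : Y => (f w : Ca)) (𝓝[Set.range d] (⟨y, hy⟩ : Y))
        (𝓝 (f ⟨y, hy⟩ : Ca)) :=
      ((continuous_subtype_val.comp f.continuous).continuousAt).mono_left nhdsWithin_le_nhds
    refine hcont.congr' ?_
    filter_upwards [self_mem_nhdsWithin] with w hw
    rcases hw with ⟨m, rfl⟩
    exact (hagree (dv m) ⟨m, rfl⟩ (d m).2).symm
  exact key.limUnder_eq

/-- There is (in ZFC) a zero-dimensional separable metrizable space (equivalently, a
non-empty subspace of the Cantor space) that is not σ-homogeneous, i.e. it cannot be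
written as a countable union of homogeneous subspaces. -/
theorem statement6 :
    ∃ X : Set (ℕ → Bool), X.Nonempty ∧
      ¬ ∃ Y : ℕ → Set (ℕ → Bool), (∀ n, Y n ⊆ X) ∧ X = ⋃ n, Y n ∧
        ∀ n, IsHomogeneousSpace (Y n) := by
  -- enumeration of codes
  have hcard : #kappa = #Code := by
    rw [mk_kappa]
    have h1 : #(ℕ → Ca) = continuum := by
      rw [Cardinal.mk_arrow, mk_Ca]
      simp [Cardinal.continuum_power_aleph0]
    simp [Code, Cardinal.mk_prod, h1]
  obtain ⟨Eqv⟩ := Cardinal.eq.mp hcard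
  set E : kappa → Code := ⇑Eqv with hE
  have hEsurj : Function.Surjective E := Eqv.surjective
  refine ⟨Set.range (pt E), Set.range_nonempty _, ?_⟩
  rintro ⟨Y, hsub, hcup, hhom⟩
  set X := Set.range (pt E) with hX
  have hXcard : #X = continuum := by
    rw [hX, Cardinal.mk_range_eq _ (pt_inj E), mk_kappa]
  -- some piece has size continuum
  have hbig : ∃ n, #(Y n) = continuum := by
    by_contra hcon
    push_neg at hcon
    have hlt : ∀ n, #(Y n) < continuum := by
      intro n
      refine lt_of_le_of_ne ?_ (hcon n)
      exact (Cardinal.mk_le_mk_of_subset (hsub n)).trans (le_of_eq hXcard)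
    have h1 : #X ≤ Cardinal.sum fun n => #(Y n) := by
      rw [hcup]
      exact Cardinal.mk_iUnion_le_sum_mk
    have h2 : Cardinal.sum (fun n => #(Y n)) < Cardinal.prod (fun _ : ℕ => continuum) :=
      Cardinal.sum_lt_prod _ _ hlt
    rw [Cardinal.prod_const] at h2
    simp [Cardinal.continuum_power_aleph0] at h2
    rw [hXcard] at h1
    exact absurd (h1.trans_lt h2) (lt_irrefl _)
  obtain ⟨n, hYc⟩ := hbig
  set Z := Y n with hZ
  have hZX : Z ⊆ X := hsub n
  have hom : IsHomogeneousSpace Z := hhom n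
  -- two distinct points
  have hnontriv : Nontrivial Z := by
    rw [← Cardinal.one_lt_iff_nontrivial, hYc]
    exact lt_of_lt_of_le one_lt_aleph0 Cardinal.aleph0_le_continuum
  obtain ⟨xb, yb, hxy⟩ := hnontriv
  obtain ⟨h, hh⟩ := hom xb yb
  have hmove : h xb ≠ xb := by rw [hh]; exact hxy.symm
  -- dense sequence
  haveI : Nonempty Z := ⟨xb⟩
  obtain ⟨d, hd⟩ := exists_dense_seq Z
  -- the code
  set c : Code := ((fun n => (d n : Ca), fun n => (h (d n) : Ca)),
    ((fun n => (h (d n) : Ca)), fun n => (d n : Ca))) with hc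
  -- evaluation of Gm and Gm'
  have hGm : ∀ z : Ca, ∀ hz : z ∈ Z, Gm c z = (h ⟨z, hz⟩ : Ca) := by
    intro z hz
    exact ext_eq ⟨h, h.continuous⟩ d hd _ (fun n => rfl) z hz
  have hGm' : ∀ z : Ca, ∀ hz : z ∈ Z, Gm' c z = (h.symm ⟨z, hz⟩ : Ca) := by
    intro z hz
    have hd2 : DenseRange (fun n => h (d n)) :=
      (h.surjective.denseRange.comp hd h.continuous)
    exact ext_eq ⟨h.symm, h.symm.continuous⟩ (fun n => h (d n)) hd2 _
      (fun n => by simp [hc]) z hz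
  -- the moved set
  set A : Set Z := {w | h w ≠ w} with hA
  have hAopen : IsOpen A := by
    have : IsClosed {w : Z | h w = w} := isClosed_eq h.continuous continuous_id
    exact this.isOpen_compl
  obtain ⟨U, hUopen, hAU⟩ := isOpen_induced_iff.mp hAopen
  have hUZne : (U ∩ Z).Nonempty := by
    refine ⟨xb, ?_, xb.2⟩
    have : (xb : Z) ∈ A := hmove
    rw [← hAU] at this
    exact this
  have hUZcard : #(U ∩ Z : Set Ca) = continuum := homog_open_big hYc hom hUopen hUZne
  -- U ∩ Z ⊆ Kset E c
  have hsubK : (U ∩ Z : Set Ca) ⊆ Kset E c := by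
    rintro z ⟨hzU, hzZ⟩
    have hzA : (⟨z, hzZ⟩ : Z) ∈ A := by rw [← hAU]; exact hzU
    have hGz : Gm c z = (h ⟨z, hzZ⟩ : Ca) := hGm z hzZ
    have hGzZ : Gm c z ∈ Z := by rw [hGz]; exact (h ⟨z, hzZ⟩).2
    refine ⟨hZX hzZ, ⟨?_, ?_⟩, hZX hGzZ⟩
    · rw [hGz]
      intro hcontra
      exact hzA (Subtype.ext hcontra)
    · rw [hGz, hGm' _ (by rw [← hGz]; exact hGzZ)]
      simp
  -- contradiction with the counting lemma
  obtain ⟨α, hα⟩ := hEsurj c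
  have hlt := mk_Kset_lt E α
  rw [hα] at hlt
  have := (Cardinal.mk_le_mk_of_subset hsubK)
  rw [hUZcard] at this
  exact absurd (this.trans_lt hlt) (lt_irrefl _)
end

section
/- Let X be a Bernstein subset of 2^ω that is rigid, and suppose Y = 2^ω \ X is homogeneous with |Y| ≥ 2. Then X is not 𝔠-hereditarily rigid; that is, there exists a 𝔠-crowded subspace of X admitting a self-homeomorphism different from the identity. -/
namespace St7
open Set Function Topology Filter

abbrev Cn := ℕ → Bool

instance : (uniformity Bool).IsCountablyGenerated := by
  rw [show (uniformity Bool) = Filter.principal (SetRel.id : SetRel Bool Bool) from rfl]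
  infer_instance

lemma exists_ne_mem_of_isOpen {U : Set Cn} (hU : IsOpen U) {x : Cn} (hx : x ∈ U) :
    ∃ y ∈ U, y ≠ x := by
  have htend : Tendsto (fun m => Function.update x m (!(x m))) atTop (𝓝 x) := by
    rw [tendsto_pi_nhds]
    intro i
    apply Tendsto.congr' (f₁ := fun _ => x i)
    · filter_upwards [eventually_gt_atTop i] with m hm
      exact (Function.update_of_ne (by omega) _ _).symm
    · exact tendsto_const_nhds
  have := htend.eventually_mem (hU.mem_nhds hx)
  rcases this.exists with ⟨m, hm⟩
  refine ⟨_, hm, fun h => ?_⟩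
  have := congrFun h m
  rw [Function.update_self] at this
  simp at this

lemma perfect_of_clopen {V : Set Cn} (ho : IsOpen V) (hc : IsClosed V) : Perfect V := by
  refine ⟨hc, fun z hz => accPt_iff_nhds.2 fun U hU => ?_⟩
  rcases mem_nhds_iff.1 hU with ⟨W, hWU, hWo, hzW⟩
  rcases exists_ne_mem_of_isOpen (hWo.inter ho) ⟨hzW, hz⟩ with ⟨y, ⟨hyW, hyV⟩, hyz⟩
  exact ⟨y, ⟨hWU hyW, hyV⟩, hyz⟩

lemma exists_isClopen_subset {U : Set Cn} (hU : IsOpen U) {x : Cn} (hx : x ∈ U) :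
    ∃ V, IsOpen V ∧ IsClosed V ∧ x ∈ V ∧ V ⊆ U := by
  have hUx : U ∈ 𝓝 x := hU.mem_nhds hx
  rw [nhds_pi, Filter.mem_pi] at hUx
  obtain ⟨I, hIfin, t, ht, htU⟩ := hUx
  refine ⟨I.pi (fun i => {x i}), isOpen_set_pi hIfin (fun i _ => isOpen_discrete _),
    isClosed_set_pi (fun i _ => isClosed_discrete _), fun i _ => rfl, ?_⟩
  refine subset_trans (fun y hy => ?_) htU
  intro i hi
  have := hy i hi
  simp only [mem_singleton_iff] at this
  rw [this]
  exact mem_of_mem_nhds (ht i)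

lemma exists_perfect_subset_isOpen {U : Set Cn} (hU : IsOpen U) {x : Cn} (hx : x ∈ U) :
    ∃ K, K ⊆ U ∧ Perfect K ∧ K.Nonempty := by
  obtain ⟨V, ho, hc, hxV, hVU⟩ := exists_isClopen_subset hU hx
  exact ⟨V, hVU, perfect_of_clopen ho hc, ⟨x, hxV⟩⟩

lemma perfect_range {f : Cn → Cn} (hc : Continuous f) (hi : Injective f) :
    Perfect (range f) := by
  refine ⟨(isCompact_range hc).isClosed, fun z hz => accPt_iff_nhds.2 fun U hU => ?_⟩
  obtain ⟨x, rfl⟩ := hz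
  have : f ⁻¹' U ∈ 𝓝 x := hc.continuousAt hU
  rcases mem_nhds_iff.1 this with ⟨W, hWU, hWo, hxW⟩
  rcases exists_ne_mem_of_isOpen hWo hxW with ⟨y, hyW, hyx⟩
  exact ⟨f y, ⟨hWU hyW, mem_range_self y⟩, fun h => hyx (hi h)⟩

lemma polish_of_isGδ {G : Set Cn} (h : IsGδ G) : PolishSpace ↥G := by
  obtain ⟨f, hfo, rfl⟩ := isGδ_iff_eq_iInter_nat.1 h
  haveI : ∀ n, PolishSpace ↥(f n) := fun n => (hfo n).polishSpace
  set φ : ↥(⋂ n, f n) → ∀ n, ↥(f n) := fun x n => ⟨x.val, (mem_iInter.1 x.2) n⟩ with hφ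
  have hφc : Continuous φ := continuous_pi fun n => continuous_subtype_val.subtype_mk _
  have hce : Topology.IsClosedEmbedding φ := by
    constructor
    · refine Topology.IsEmbedding.of_comp hφc
        (continuous_subtype_val.comp (continuous_apply 0)) ?_
      exact (Topology.IsEmbedding.subtypeVal : IsEmbedding (Subtype.val : ↥(⋂ n, f n) → Cn))
    · have : range φ = ⋂ n, {g : ∀ n, ↥(f n) | (g n).val = (g 0).val} := by
        ext g
        simp only [mem_range, mem_iInter, mem_setOf_eq]
        constructor
        · rintro ⟨x, rfl⟩ n; rfl
        · intro hg
          have hx : (g 0).val ∈ ⋂ n, f n := mem_iInter.2 fun n => (hg n) ▸ (g n).2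
          exact ⟨⟨(g 0).val, hx⟩, funext fun n => Subtype.ext (hg n).symm⟩
      rw [this]
      exact isClosed_iInter fun n => isClosed_eq
        (continuous_subtype_val.comp (continuous_apply n))
        (continuous_subtype_val.comp (continuous_apply 0))
  exact hce.polishSpace

lemma dense_compl_singleton' (z : Cn) : Dense ({z}ᶜ : Set Cn) := by
  rw [dense_iff_inter_open]
  intro W hWo hWne
  obtain ⟨w, hw⟩ := hWne
  by_cases hwz : w = z
  · obtain ⟨y, hyW, hyw⟩ := exists_ne_mem_of_isOpen hWo hw
    exact ⟨y, hyW, by simp [hwz ▸ hyw]⟩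
  · exact ⟨w, hw, by simp [hwz]⟩

lemma uncountable_open_inter {G : Set Cn} (hG : IsGδ G) (hd : Dense G)
    {U : Set Cn} (hU : IsOpen U) (hne : (U ∩ G).Nonempty) : ¬ (U ∩ G).Countable := by
  intro hcount
  obtain ⟨f, hfo, rfl⟩ := isGδ_iff_eq_iInter_nat.1 hG
  haveI : Countable ↥(U ∩ ⋂ n, f n) := hcount.to_subtype
  set F : ℕ ⊕ ↥(U ∩ ⋂ n, f n) → Set Cn := Sum.elim f (fun z => {z.val}ᶜ) with hF
  have hdense : Dense (⋂ i, F i) := by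
    apply dense_iInter_of_isOpen
    · rintro (n | z)
      · exact hfo n
      · exact isOpen_compl_singleton
    · rintro (n | z)
      · exact hd.mono (iInter_subset f n)
      · exact dense_compl_singleton' _
  obtain ⟨w, hwU, hwF⟩ := hdense.inter_open_nonempty U hU ⟨hne.choose, hne.choose_spec.1⟩
  have hwG : w ∈ ⋂ n, f n := mem_iInter.2 fun n => mem_iInter.1 hwF (Sum.inl n)
  have h2 : w ∈ F (Sum.inr ⟨w, hwU, hwG⟩) := mem_iInter.1 hwF (Sum.inr ⟨w, hwU, hwG⟩)
  have h3 : w ∈ ({w}ᶜ : Set Cn) := h2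
  exact h3 rfl

lemma exists_perfect_subset_inter {G : Set Cn} (hG : IsGδ G) (hd : Dense G)
    {U : Set Cn} (hU : IsOpen U) (hne : (U ∩ G).Nonempty) :
    ∃ K, K ⊆ U ∩ G ∧ Perfect K ∧ K.Nonempty := by
  haveI : PolishSpace ↥(U ∩ G) := polish_of_isGδ (hU.isGδ.inter hG)
  have hunc : ¬ (univ : Set ↥(U ∩ G)).Countable := by
    intro hc
    rw [Set.countable_univ_iff] at hc
    exact uncountable_open_inter hG hd hU hne (Set.countable_coe_iff.1 hc)
  obtain ⟨f, -, hfc, hfi⟩ := isClosed_univ.exists_nat_bool_injection_of_not_countable hunc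
  refine ⟨range (fun x => (f x).val), ?_, perfect_range
    (continuous_subtype_val.comp hfc) (Subtype.val_injective.comp hfi), range_nonempty _⟩
  rintro _ ⟨x, rfl⟩
  exact (f x).2

noncomputable def itl (x y : Cn) : Cn := fun k => if k % 2 = 0 then x (k/2) else y (k/2)

lemma itl_cont (x : Cn) : Continuous (itl x) := by
  apply continuous_pi
  intro k
  dsimp [itl]
  split
  · exact continuous_const
  · exact continuous_apply _

lemma itl_injx {x x' y y' : Cn} (h : itl x y = itl x' y') : x = x' := by
  funext i
  have h2 := congrFun h (2*i)
  have e1 : (2*i) % 2 = 0 := by omega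
  have e2 : 2*i/2 = i := by omega
  simpa [itl, e1, e2] using h2

lemma itl_injy (x : Cn) : Injective (itl x) := by
  intro y y' h
  funext i
  have h2 := congrFun h (2*i+1)
  have e1 : (2*i+1) % 2 = 1 := by omega
  have e2 : (2*i+1)/2 = i := by omega
  simpa [itl, e1, e2] using h2

lemma mk_cn : Cardinal.mk Cn = Cardinal.continuum := by
  rw [← Cardinal.two_power_aleph0]
  rw [← Cardinal.mk_bool, ← Cardinal.mk_denumerable ℕ, Cardinal.power_def]

lemma continuum_le_mk_inter {X : Set Cn}
    (hB : ∀ K : Set Cn, Perfect K → K.Nonempty → (K ∩ X).Nonempty)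
    {K : Set Cn} (hK : Perfect K) (hKne : K.Nonempty) :
    Cardinal.continuum ≤ Cardinal.mk ↥(K ∩ X) := by
  letI := TopologicalSpace.upgradeIsCompletelyMetrizable Cn
  obtain ⟨f, hfK, hfc, hfi⟩ := hK.exists_nat_bool_injection hKne
  have hpx : ∀ x : Cn, (range (f ∘ itl x) ∩ X).Nonempty := fun x =>
    hB _ (perfect_range (hfc.comp (itl_cont x)) (hfi.comp (itl_injy x))) (range_nonempty _)
  choose p hp1 hp2 using fun x => (hpx x)
  have hmem : ∀ x : Cn, p x ∈ K ∩ X := by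
    intro x
    obtain ⟨y, hy⟩ := hp1 x
    exact ⟨hfK (by rw [← hy]; exact mem_range_self _), hp2 x⟩
  have hinj : Injective (fun x : Cn => (⟨p x, hmem x⟩ : ↥(K ∩ X))) := by
    intro x x' h
    have hpp : p x = p x' := congrArg Subtype.val h
    obtain ⟨y, hy⟩ := hp1 x
    obtain ⟨y', hy'⟩ := hp1 x'
    have : f (itl x y) = f (itl x' y') := by
      simp only [comp_apply] at hy hy'
      rw [hy, hy', hpp]
    exact itl_injx (hfi this)
  calc Cardinal.continuum = Cardinal.mk Cn := mk_cn.symm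
    _ ≤ Cardinal.mk ↥(K ∩ X) := Cardinal.mk_le_of_injective hinj

def Pk (Y : Set Cn) (f : Cn → Cn) (n : ℕ) (x : Cn) (b : Bool) : Prop :=
  ∃ U, IsOpen U ∧ x ∈ U ∧ ∀ y ∈ U ∩ Y, f y n = b

lemma kuratowski (Y : Set Cn) (f : Cn → Cn) (hf : ContinuousOn f Y) :
    ∃ (G : Set Cn) (F : Cn → Cn), IsGδ G ∧ Y ⊆ G ∧ ContinuousOn F G ∧ ∀ y ∈ Y, F y = f y := by
  classical
  set P := Pk Y f with hP
  have huniq : ∀ n x b b', x ∈ closure Y → P n x b → P n x b' → b = b' := by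
    rintro n x b b' hx ⟨U, hUo, hxU, hU⟩ ⟨V, hVo, hxV, hV⟩
    obtain ⟨y, ⟨hyU, hyV⟩, hyY⟩ := mem_closure_iff.1 hx (U ∩ V) (hUo.inter hVo) ⟨hxU, hxV⟩
    rw [← hU y ⟨hyU, hyY⟩, hV y ⟨hyV, hyY⟩]
  set Gn : ℕ → Set Cn := fun n => {x | ∃ b, P n x b} with hGn
  have hGno : ∀ n, IsOpen (Gn n) := by
    intro n
    rw [isOpen_iff_forall_mem_open]
    rintro x ⟨b, U, hUo, hxU, hU⟩
    exact ⟨U, fun x' hx' => ⟨b, U, hUo, hx', hU⟩, hUo, hxU⟩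
  set G := closure Y ∩ ⋂ n, Gn n with hG
  set F : Cn → Cn := fun x n => if h : ∃ b, P n x b then h.choose else false with hF
  have hFspec : ∀ n x, x ∈ Gn n → P n x (F x n) := by
    intro n x hx
    have hx' : ∃ b, P n x b := hx
    have : F x n = (dite (∃ b, P n x b) (fun h => h.choose) (fun _ => false)) := rfl
    rw [this, dif_pos hx']
    exact hx'.choose_spec
  have hPy : ∀ y ∈ Y, ∀ n, P n y (f y n) := by
    intro y hy n
    have hcw : ContinuousWithinAt (fun x => f x n) Y y :=
      (continuous_apply n).continuousAt.comp_continuousWithinAt (hf y hy)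
    have hnb : ({f y n} : Set Bool) ∈ 𝓝 (f y n) := (isOpen_discrete _).mem_nhds rfl
    have hpre := hcw hnb
    rw [Filter.mem_map, mem_nhdsWithin] at hpre
    obtain ⟨U, hUo, hyU, hUsub⟩ := hpre
    exact ⟨U, hUo, hyU, fun z hz => hUsub hz⟩
  have hYsub : Y ⊆ G := fun y hy =>
    ⟨subset_closure hy, mem_iInter.2 fun n => ⟨f y n, hPy y hy n⟩⟩
  refine ⟨G, F, ?_, hYsub, ?_, ?_⟩
  · exact (isClosed_closure.isGδ).inter (IsGδ.iInter fun n => (hGno n).isGδ)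
  · intro x hx
    rw [continuousWithinAt_pi]
    intro n
    obtain ⟨b, U, hUo, hxU, hb⟩ := mem_iInter.1 hx.2 n
    have hkey : ∀ x' ∈ U ∩ G, F x' n = b := by
      rintro x' ⟨hx'U, hx'G⟩
      exact huniq n x' _ _ hx'G.1 (hFspec n x' (mem_iInter.1 hx'G.2 n)) ⟨U, hUo, hx'U, hb⟩
    have hxb : F x n = b := hkey x ⟨hxU, hx⟩
    have heq : ∀ᶠ x' in 𝓝[G] x, F x' n = F x n := by
      rw [eventually_iff, mem_nhdsWithin]
      exact ⟨U, hUo, hxU, fun x' hx' => (hkey x' hx').trans hxb.symm⟩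
    exact Tendsto.congr' (heq.mono fun _ h => h.symm) tendsto_const_nhds
  · intro y hy
    funext n
    exact huniq n y _ _ (subset_closure hy)
      (hFspec n y ⟨f y n, hPy y hy n⟩) (hPy y hy n)

lemma isGδ_inter_preimage {F : Cn → Cn} {A S : Set Cn} (hA : IsGδ A)
    (hF : ContinuousOn F A) (hS : IsGδ S) : IsGδ (A ∩ F ⁻¹' S) := by
  obtain ⟨g, hgo, rfl⟩ := isGδ_iff_eq_iInter_nat.1 hS
  choose u huo hueq using fun n => continuousOn_iff'.1 hF (g n) (hgo n)
  have heq : A ∩ F ⁻¹' ⋂ n, g n = A ∩ ⋂ n, u n := by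
    ext x
    simp only [mem_inter_iff, mem_preimage, mem_iInter]
    refine and_congr_right fun hxA => forall_congr' fun n => ?_
    constructor
    · intro hx
      have : x ∈ F ⁻¹' g n ∩ A := ⟨hx, hxA⟩
      rw [hueq n] at this
      exact this.1
    · intro hx
      have : x ∈ u n ∩ A := ⟨hx, hxA⟩
      rw [← hueq n] at this
      exact this.1
  rw [heq]
  exact hA.inter (IsGδ.iInter fun n => (huo n).isGδ)

lemma isGδ_fixed {S : Set Cn} (hS : IsGδ S) {φ : Cn → Cn} (hφ : ContinuousOn φ S) :
    IsGδ (S ∩ {x | φ x = x}) := by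
  have hcl : IsClosed {z : ↥S | φ z.val = z.val} :=
    isClosed_eq hφ.restrict continuous_subtype_val
  rw [isClosed_induced_iff] at hcl
  obtain ⟨t, htc, hteq⟩ := hcl
  have heq : S ∩ {x | φ x = x} = S ∩ t := by
    ext x
    simp only [mem_inter_iff, mem_setOf_eq]
    refine and_congr_right fun hxS => ?_
    constructor
    · intro hfix
      have : (⟨x, hxS⟩ : ↥S) ∈ {z : ↥S | φ z.val = z.val} := hfix
      rw [← hteq] at this
      exact this
    · intro hxt
      have : (⟨x, hxS⟩ : ↥S) ∈ Subtype.val ⁻¹' t := hxt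
      rw [hteq] at this
      exact this
  rw [heq]
  exact hS.inter htc.isGδ

def Eseq (A B : Set Cn) (F G : Cn → Cn) : ℕ → Set Cn
  | 0 => A ∩ B
  | n+1 => Eseq A B F G n ∩ ((A ∩ F ⁻¹' (Eseq A B F G n)) ∩ (B ∩ G ⁻¹' (Eseq A B F G n)))

lemma invariant_gdelta {Y : Set Cn} (h : ↥Y ≃ₜ ↥Y) :
    ∃ (Gs : Set Cn) (F G : Cn → Cn), IsGδ Gs ∧ Y ⊆ Gs ∧ ContinuousOn F Gs ∧
      (∀ y (hy : y ∈ Y), F y = (h ⟨y, hy⟩).val) ∧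
      (∀ x ∈ Gs, F x ∈ Gs) ∧ (∀ x ∈ Gs, G x ∈ Gs) ∧
      (∀ x ∈ Gs, G (F x) = x) ∧ (∀ x ∈ Gs, F (G x) = x) ∧ ContinuousOn G Gs ∧
      (∀ y (hy : y ∈ Y), G y = (h.symm ⟨y, hy⟩).val) := by
  classical
  set f₀ : Cn → Cn := fun x => if hx : x ∈ Y then (h ⟨x, hx⟩).val else x with hf₀
  set g₀ : Cn → Cn := fun x => if hx : x ∈ Y then (h.symm ⟨x, hx⟩).val else x with hg₀
  have hf₀c : ContinuousOn f₀ Y := by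
    rw [continuousOn_iff_continuous_restrict]
    have : Y.domRestrict f₀ = fun z => (h z).val := by
      funext z
      simp only [domRestrict_apply, hf₀, dif_pos z.2]
    rw [this]
    exact continuous_subtype_val.comp h.continuous
  have hg₀c : ContinuousOn g₀ Y := by
    rw [continuousOn_iff_continuous_restrict]
    have : Y.domRestrict g₀ = fun z => (h.symm z).val := by
      funext z
      simp only [domRestrict_apply, hg₀, dif_pos z.2]
    rw [this]
    exact continuous_subtype_val.comp h.symm.continuous
  obtain ⟨UF, F, hUF, hYUF, hFc, hFeq⟩ := kuratowski Y f₀ hf₀c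
  obtain ⟨UG, G, hUG, hYUG, hGc, hGeq⟩ := kuratowski Y g₀ hg₀c
  have hFY : ∀ y (hy : y ∈ Y), F y = (h ⟨y, hy⟩).val := by
    intro y hy
    rw [hFeq y hy]
    simp only [hf₀, dif_pos hy]
  have hGY : ∀ y (hy : y ∈ Y), G y = (h.symm ⟨y, hy⟩).val := by
    intro y hy
    rw [hGeq y hy]
    simp only [hg₀, dif_pos hy]
  have hFmem : ∀ y, y ∈ Y → F y ∈ Y := fun y hy => (hFY y hy) ▸ (h ⟨y, hy⟩).2
  have hGmem : ∀ y, y ∈ Y → G y ∈ Y := fun y hy => (hGY y hy) ▸ (h.symm ⟨y, hy⟩).2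
  set S₁ := UF ∩ F ⁻¹' UG with hS₁
  have hS₁g : IsGδ S₁ := isGδ_inter_preimage hUF hFc hUG
  have hGFc : ContinuousOn (fun x => G (F x)) S₁ :=
    hGc.comp (hFc.mono inter_subset_left) fun x hx => hx.2
  set A := S₁ ∩ {x | G (F x) = x} with hA
  have hAg : IsGδ A := isGδ_fixed hS₁g hGFc
  have hYA : Y ⊆ A := by
    intro y hy
    have hFyY : F y ∈ Y := hFmem y hy
    refine ⟨⟨hYUF hy, hYUG hFyY⟩, ?_⟩
    show G (F y) = y
    rw [hGY (F y) hFyY]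
    have : (⟨F y, hFyY⟩ : ↥Y) = h ⟨y, hy⟩ := Subtype.ext (hFY y hy)
    rw [this, Homeomorph.symm_apply_apply]
  set S₂ := UG ∩ G ⁻¹' UF with hS₂
  have hS₂g : IsGδ S₂ := isGδ_inter_preimage hUG hGc hUF
  have hFGc : ContinuousOn (fun x => F (G x)) S₂ :=
    hFc.comp (hGc.mono inter_subset_left) fun x hx => hx.2
  set B := S₂ ∩ {x | F (G x) = x} with hB
  have hBg : IsGδ B := isGδ_fixed hS₂g hFGc
  have hYB : Y ⊆ B := by
    intro y hy
    have hGyY : G y ∈ Y := hGmem y hy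
    refine ⟨⟨hYUG hy, hYUF hGyY⟩, ?_⟩
    show F (G y) = y
    rw [hFY (G y) hGyY]
    have : (⟨G y, hGyY⟩ : ↥Y) = h.symm ⟨y, hy⟩ := Subtype.ext (hGY y hy)
    rw [this, Homeomorph.apply_symm_apply]
  have hAsubUF : A ⊆ UF := fun x hx => hx.1.1
  have hBsubUG : B ⊆ UG := fun x hx => hx.1.1
  have hFcA : ContinuousOn F A := hFc.mono hAsubUF
  have hGcB : ContinuousOn G B := hGc.mono hBsubUG
  set E := Eseq A B F G with hE
  have hEg : ∀ n, IsGδ (E n) := by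
    intro n
    induction n with
    | zero => exact hAg.inter hBg
    | succ n ih =>
      exact ih.inter ((isGδ_inter_preimage hAg hFcA ih).inter
        (isGδ_inter_preimage hBg hGcB ih))
  have hYE : ∀ n, Y ⊆ E n := by
    intro n
    induction n with
    | zero => exact fun y hy => ⟨hYA hy, hYB hy⟩
    | succ n ih =>
      intro y hy
      exact ⟨ih hy, ⟨⟨hYA hy, ih (hFmem y hy)⟩, ⟨hYB hy, ih (hGmem y hy)⟩⟩⟩
  set Gs := ⋂ n, E n with hGs
  have hGsE : ∀ n, Gs ⊆ E n := fun n => iInter_subset E n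
  have hGsA : Gs ⊆ A := fun x hx => ((hGsE 0) hx).1
  have hGsB : Gs ⊆ B := fun x hx => ((hGsE 0) hx).2
  refine ⟨Gs, F, G, IsGδ.iInter hEg, fun y hy => mem_iInter.2 fun n => hYE n hy,
    hFc.mono (fun x hx => (hGsA hx).1.1), hFY, ?_, ?_, ?_, ?_,
    hGc.mono (fun x hx => (hGsB hx).1.1), hGY⟩
  · intro x hx
    refine mem_iInter.2 fun n => ?_
    have := (hGsE (n+1)) hx
    exact this.2.1.2
  · intro x hx
    refine mem_iInter.2 fun n => ?_
    have := (hGsE (n+1)) hx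
    exact this.2.2.2
  · intro x hx
    exact (hGsA hx).2
  · intro x hx
    exact (hGsB hx).2

end St7

/-- If `X ⊆ 2^ω` is Bernstein and rigid while its complement is homogeneous with at least
two points, then `X` is not `𝔠`-hereditarily rigid: some `𝔠`-crowded subspace of `X` has a
self-homeomorphism other than the identity. -/
theorem statement7 (X : Set (ℕ → Bool))
    (hBernstein : ∀ K : Set (ℕ → Bool), Perfect K → K.Nonempty →
      (K ∩ X).Nonempty ∧ (K ∩ Xᶜ).Nonempty)
    (hrigid : (∃ a b : X, a ≠ b) ∧ ∀ h : X ≃ₜ X, ∀ a : X, h a = a)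
    (hhom : IsHomogeneousSpace ↥(Xᶜ))
    (hY2 : ∃ a b : ↥(Xᶜ), a ≠ b) :
    ∃ S : Set (ℕ → Bool), S ⊆ X ∧ SetCCrowded S ∧ ∃ h : S ≃ₜ S, ∃ a : S, h a ≠ a := by
  classical
  open Set Function Topology Filter in
  have hDY : Dense (Xᶜ : Set St7.Cn) := by
    rw [dense_iff_inter_open]
    intro U hU hUne
    obtain ⟨x, hx⟩ := hUne
    obtain ⟨K, hKU, hKp, hKne⟩ := St7.exists_perfect_subset_isOpen hU hx
    obtain ⟨z, hz⟩ := (hBernstein K hKp hKne).2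
    exact ⟨z, hKU hz.1, hz.2⟩
  obtain ⟨a, b, hab⟩ := hY2
  obtain ⟨h, hhab⟩ := hhom a b
  obtain ⟨Gs, F, G, hGδ, hYGs, hFc, hFY, hFinv, hGinv, hGF, hFG, hGc, hGY⟩ :=
    St7.invariant_gdelta h
  have hGsd : Dense Gs := hDY.mono hYGs
  set S := Gs ∩ X with hSdef
  have hSX : S ⊆ X := Set.inter_subset_right
  have hSGs : S ⊆ Gs := Set.inter_subset_left
  have hFS : ∀ z ∈ S, F z ∈ S := by
    rintro z ⟨hzG, hzX⟩
    refine ⟨hFinv z hzG, ?_⟩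
    by_contra hFzX
    have hFzY : F z ∈ Xᶜ := hFzX
    have hzY : z ∈ Xᶜ := by
      rw [← hGF z hzG]
      exact (hGY (F z) hFzY) ▸ (h.symm ⟨F z, hFzY⟩).2
    exact hzY hzX
  have hGS : ∀ z ∈ S, G z ∈ S := by
    rintro z ⟨hzG, hzX⟩
    refine ⟨hGinv z hzG, ?_⟩
    by_contra hGzX
    have hGzY : G z ∈ Xᶜ := hGzX
    have hzY : z ∈ Xᶜ := by
      rw [← hFG z hzG]
      exact (hFY (G z) hGzY) ▸ (h ⟨G z, hGzY⟩).2
    exact hzY hzX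
  have haY : (a : St7.Cn) ∈ Xᶜ := a.2
  have haGs : (a : St7.Cn) ∈ Gs := hYGs haY
  -- density of S inside Gs
  have hdense_in : ∀ o : Set St7.Cn, IsOpen o → ∀ x ∈ o, x ∈ Gs → (o ∩ S).Nonempty := by
    intro o ho x hxo hxGs
    obtain ⟨K, hKsub, hKp, hKne⟩ :=
      St7.exists_perfect_subset_inter hGδ hGsd ho ⟨x, hxo, hxGs⟩
    obtain ⟨z, hzK, hzX⟩ := (hBernstein K hKp hKne).1
    exact ⟨z, (hKsub hzK).1, (hKsub hzK).2, hzX⟩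
  refine ⟨S, hSX, ⟨?_, ?_⟩, ?_⟩
  · obtain ⟨z, _, hz⟩ := hdense_in Set.univ isOpen_univ _ (Set.mem_univ _) haGs
    exact ⟨z, hz⟩
  · intro U hU hUS
    obtain ⟨x, hxU, hxGs, hxX⟩ := hUS
    obtain ⟨K, hKsub, hKp, hKne⟩ :=
      St7.exists_perfect_subset_inter hGδ hGsd hU ⟨x, hxU, hxGs⟩
    apply le_antisymm
    · calc Cardinal.mk ↥(U ∩ S) ≤ Cardinal.mk St7.Cn := Cardinal.mk_set_le _
        _ = Cardinal.continuum := St7.mk_cn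
    · have h1 : Cardinal.continuum ≤ Cardinal.mk ↥(K ∩ X) :=
        St7.continuum_le_mk_inter (fun K hp hn => (hBernstein K hp hn).1) hKp hKne
      have h2 : K ∩ X ⊆ U ∩ S := fun z hz => ⟨(hKsub hz.1).1, (hKsub hz.1).2, hz.2⟩
      exact h1.trans (Cardinal.mk_le_mk_of_subset h2)
  · refine ⟨⟨⟨fun z => ⟨F z.1, hFS z.1 z.2⟩, fun z => ⟨G z.1, hGS z.1 z.2⟩,
      fun z => Subtype.ext (hGF z.1 (hSGs z.2)), fun z => Subtype.ext (hFG z.1 (hSGs z.2))⟩,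
      ((hFc.mono hSGs).restrict).subtype_mk _, ((hGc.mono hSGs).restrict).subtype_mk _⟩, ?_⟩
    by_contra hcon
    push_neg at hcon
    have hfix : ∀ z ∈ S, F z = z := fun z hz => congrArg Subtype.val (hcon ⟨z, hz⟩)
    have hFa : F (a : St7.Cn) = (b : St7.Cn) := by
      have h2 : h ⟨(a : St7.Cn), haY⟩ = b := hhab
      rw [hFY (a : St7.Cn) haY, h2]
    have hFa_ne : F (a : St7.Cn) ≠ (a : St7.Cn) := by
      rw [hFa]
      intro hc
      exact hab (Subtype.ext hc.symm)
    have hacl : (a : St7.Cn) ∈ closure S := by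
      rw [mem_closure_iff]
      intro o ho hao
      exact hdense_in o ho _ hao haGs
    haveI hne : (nhdsWithin (a : St7.Cn) S).NeBot := mem_closure_iff_nhdsWithin_neBot.1 hacl
    have t1 : Filter.Tendsto F (nhdsWithin (a : St7.Cn) S) (nhds (F (a : St7.Cn))) :=
      (hFc _ haGs).mono_left (nhdsWithin_mono _ hSGs)
    have t2 : Filter.Tendsto F (nhdsWithin (a : St7.Cn) S) (nhds (a : St7.Cn)) := by
      apply Filter.Tendsto.congr' _ (tendsto_id.mono_left nhdsWithin_le_nhds)
      filter_upwards [self_mem_nhdsWithin] with z hz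
      exact (hfix z hz).symm
    exact hFa_ne (tendsto_nhds_unique t1 t2)
end

section
/- Let Z be an uncountable zero-dimensional Polish space and let 1 ≤ η < ω₁, 1 ≤ ξ < ω₁. Then the class D_η(Σ⁰_ξ(Z)) of η-differences of Σ⁰_ξ sets is a non-selfdual Wadge class in Z. -/
/-- The additive Borel classes `Σ⁰_ξ(Z)`: `Σ⁰₁` is the class of open sets, and for `ξ > 1`
a set is `Σ⁰_ξ` iff it is a countable union of complements of sets in classes `Σ⁰_{ξₙ}`
with `1 ≤ ξₙ < ξ` (open sets are allowed throughout). -/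
noncomputable def SigmaClass (Z : Type*) [TopologicalSpace Z] : Ordinal → Set (Set Z) :=
  Ordinal.lt_wf.fix fun ξ ih =>
    {A | IsOpen A} ∪
      {A | ∃ (g : ℕ → {o : Ordinal // o < ξ}) (f : ℕ → Set Z),
        (∀ n, 1 ≤ (g n : Ordinal) ∧ f n ∈ ih (g n) (g n).2) ∧ A = ⋃ n, (f n)ᶜ}

/-- An ordinal is even iff its finite part (its residue modulo `ω`) is even. -/
def OrdEven (o : Ordinal) : Prop := Even (o % Ordinal.omega0)

/-- The `η`-difference of the sequence of sets `A`: the union of `A μ \ ⋃_{ζ < μ} A ζ`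
over all `μ < η` whose parity is opposite to that of `η`. -/
def DiffKernel {Z : Type*} (η : Ordinal) (A : Ordinal → Set Z) : Set Z :=
  {z | ∃ μ, μ < η ∧ (OrdEven μ ↔ ¬ OrdEven η) ∧ z ∈ A μ ∧ ∀ ζ, ζ < μ → z ∉ A ζ}

/-- The class `D_η(Σ⁰_ξ(Z))` of `η`-differences of `Σ⁰_ξ` subsets of `Z`. -/
noncomputable def DiffClass (η ξ : Ordinal) (Z : Type*) [TopologicalSpace Z] :
    Set (Set Z) :=
  {B | ∃ A : Ordinal → Set Z, (∀ μ, μ < η → A μ ∈ SigmaClass Z ξ) ∧ B = DiffKernel η A}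

/-- Wadge reducibility: `A ≤ B` iff `A` is a continuous preimage of `B`. -/
def WadgeLE {Z : Type*} [TopologicalSpace Z] (A B : Set Z) : Prop :=
  ∃ f : Z → Z, Continuous f ∧ A = f ⁻¹' B

theorem sigmaClass_eq (Z : Type*) [TopologicalSpace Z] (ξ : Ordinal) :
    SigmaClass Z ξ = {A | IsOpen A} ∪
      {A | ∃ (g : ℕ → {o : Ordinal // o < ξ}) (f : ℕ → Set Z),
        (∀ n, 1 ≤ (g n : Ordinal) ∧ f n ∈ SigmaClass Z (g n)) ∧ A = ⋃ n, (f n)ᶜ} := by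
  unfold SigmaClass
  rw [WellFounded.fix_eq]

theorem mem_sigmaClass_iff {Z : Type*} [TopologicalSpace Z] {ξ : Ordinal} {A : Set Z} :
    A ∈ SigmaClass Z ξ ↔ IsOpen A ∨ ∃ (g : ℕ → Ordinal) (f : ℕ → Set Z),
      (∀ n, 1 ≤ g n ∧ g n < ξ ∧ f n ∈ SigmaClass Z (g n)) ∧ A = ⋃ n, (f n)ᶜ := by
  rw [sigmaClass_eq]
  constructor
  · rintro (h | ⟨g, f, hg, rfl⟩)
    · exact Or.inl h
    · exact Or.inr ⟨fun n => g n, f, fun n => ⟨(hg n).1, (g n).2, (hg n).2⟩, rfl⟩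
  · rintro (h | ⟨g, f, hg, rfl⟩)
    · exact Or.inl h
    · exact Or.inr ⟨fun n => ⟨g n, (hg n).2.1⟩, f, fun n => ⟨(hg n).1, (hg n).2.2⟩, rfl⟩

theorem isOpen_mem_sigmaClass {Z : Type*} [TopologicalSpace Z] {ξ : Ordinal} {A : Set Z}
    (h : IsOpen A) : A ∈ SigmaClass Z ξ := mem_sigmaClass_iff.mpr (Or.inl h)

theorem iUnion_compl_mem_sigmaClass {Z : Type*} [TopologicalSpace Z] {ξ : Ordinal}
    {g : ℕ → Ordinal} {f : ℕ → Set Z} (hg : ∀ n, 1 ≤ g n ∧ g n < ξ)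
    (hf : ∀ n, f n ∈ SigmaClass Z (g n)) :
    (⋃ n, (f n)ᶜ) ∈ SigmaClass Z ξ :=
  mem_sigmaClass_iff.mpr (Or.inr ⟨g, f, fun n => ⟨(hg n).1, (hg n).2, hf n⟩, rfl⟩)

theorem mem_sigmaClass_one_iff {Z : Type*} [TopologicalSpace Z] {A : Set Z} :
    A ∈ SigmaClass Z 1 ↔ IsOpen A := by
  rw [mem_sigmaClass_iff]
  refine ⟨fun h => ?_, Or.inl⟩
  rcases h with h | ⟨g, f, hg, rfl⟩
  · exact h
  · have := (hg 0).1
    have := (hg 0).2.1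
    have : (1 : Ordinal) < 1 := lt_of_le_of_lt (hg 0).1 (hg 0).2.1
    exact absurd this (lt_irrefl _)

theorem sigmaClass_preimage : ∀ (ξ : Ordinal) {X Y : Type*} [TopologicalSpace X]
    [TopologicalSpace Y] (φ : X → Y), Continuous φ → ∀ S ∈ SigmaClass Y ξ,
    φ ⁻¹' S ∈ SigmaClass X ξ := by
  intro ξ
  induction ξ using Ordinal.induction with
  | _ ξ ih =>
    intro X Y _ _ φ hφ S hS
    rcases mem_sigmaClass_iff.mp hS with h | ⟨g, f, hg, rfl⟩
    · exact isOpen_mem_sigmaClass (h.preimage hφ)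
    · rw [Set.preimage_iUnion]
      exact iUnion_compl_mem_sigmaClass (fun n => ⟨(hg n).1, (hg n).2.1⟩)
        (fun n => ih _ (hg n).2.1 φ hφ _ (hg n).2.2)

theorem sigmaClass_union_inter_clopen : ∀ (ξ : Ordinal) {X : Type*} [TopologicalSpace X]
    (V : Set X), IsClopen V → ∀ S ∈ SigmaClass X ξ,
    S ∪ V ∈ SigmaClass X ξ ∧ S ∩ V ∈ SigmaClass X ξ := by
  intro ξ
  induction ξ using Ordinal.induction with
  | _ ξ ih =>
    intro X _ V hV S hS
    rcases mem_sigmaClass_iff.mp hS with h | ⟨g, f, hg, rfl⟩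
    · exact ⟨isOpen_mem_sigmaClass (h.union hV.isOpen),
        isOpen_mem_sigmaClass (h.inter hV.isOpen)⟩
    · constructor
      · have : (⋃ n, (f n)ᶜ) ∪ V = ⋃ n, (f n ∩ Vᶜ)ᶜ := by
          ext x
          simp only [Set.mem_union, Set.mem_iUnion, Set.mem_compl_iff, Set.mem_inter_iff,
            not_and, not_not]
          constructor
          · rintro (⟨n, h⟩ | h)
            · exact ⟨n, fun h' => absurd h' h⟩
            · exact ⟨0, fun _ => h⟩
          · rintro ⟨n, h⟩
            by_cases hx : x ∈ f n
            · exact Or.inr (h hx)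
            · exact Or.inl ⟨n, hx⟩
        rw [this]
        exact iUnion_compl_mem_sigmaClass (fun n => ⟨(hg n).1, (hg n).2.1⟩)
          (fun n => (ih _ (hg n).2.1 Vᶜ hV.compl _ (hg n).2.2).2)
      · have : (⋃ n, (f n)ᶜ) ∩ V = ⋃ n, (f n ∪ Vᶜ)ᶜ := by
          ext x
          simp only [Set.mem_inter_iff, Set.mem_iUnion, Set.mem_compl_iff, Set.mem_union,
            not_or, not_not]
          tauto
        rw [this]
        exact iUnion_compl_mem_sigmaClass (fun n => ⟨(hg n).1, (hg n).2.1⟩)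
          (fun n => (ih _ (hg n).2.1 Vᶜ hV.compl _ (hg n).2.2).1)


/-- `DiffKernel` commutes with preimages. -/
theorem diffKernel_preimage {X Y : Type*} (φ : X → Y) (η : Ordinal) (A : Ordinal → Set Y) :
    φ ⁻¹' DiffKernel η A = DiffKernel η (fun μ => φ ⁻¹' A μ) := rfl

/-- `DiffKernel η` only depends on the values of the family below `η`. -/
theorem diffKernel_congr {Z : Type*} {η : Ordinal} {A B : Ordinal → Set Z}
    (h : ∀ μ, μ < η → A μ = B μ) : DiffKernel η A = DiffKernel η B := by
  ext z
  constructor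
  · rintro ⟨μ, hμ, hpar, hz, hmin⟩
    exact ⟨μ, hμ, hpar, (h μ hμ) ▸ hz, fun ζ hζ => (h ζ (hζ.trans hμ)) ▸ hmin ζ hζ⟩
  · rintro ⟨μ, hμ, hpar, hz, hmin⟩
    exact ⟨μ, hμ, hpar, (h μ hμ).symm ▸ hz, fun ζ hζ => (h ζ (hζ.trans hμ)).symm ▸ hmin ζ hζ⟩

/-- `DiffClass` is closed under continuous preimages. -/
theorem diffClass_preimage {X Y : Type*} [TopologicalSpace X] [TopologicalSpace Y]
    {η ξ : Ordinal} (φ : X → Y) (hφ : Continuous φ) {B : Set Y} (hB : B ∈ DiffClass η ξ Y) :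
    φ ⁻¹' B ∈ DiffClass η ξ X := by
  obtain ⟨A, hA, rfl⟩ := hB
  exact ⟨fun μ => φ ⁻¹' A μ, fun μ hμ => sigmaClass_preimage ξ φ hφ _ (hA μ hμ),
    diffKernel_preimage φ η A⟩

abbrev Cant : Type := ℕ → Bool

/-- Basic clopen cylinder determined by a finite list of bits. -/
def cyl (s : List Bool) : Set Cant := {x | ∀ i, i < s.length → x i = s.getD i false}

theorem isClopen_cyl (s : List Bool) : IsClopen (cyl s) := by
  have : cyl s = ⋂ i ∈ Finset.range s.length, (fun x : Cant => x i) ⁻¹' {s.getD i false} := by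
    ext x
    simp [cyl]
  rw [this]
  apply isClopen_biInter_finset
  intro i _
  exact (isClopen_discrete {s.getD i false}).preimage (continuous_apply i)

theorem mem_cyl_ofFn (x : Cant) (n : ℕ) : x ∈ cyl (List.ofFn fun i : Fin n => x i) := by
  intro i hi
  rw [List.length_ofFn] at hi
  simp [List.getD, List.getElem?_ofFn, hi]

theorem cyl_ofFn_subset {x y : Cant} {n : ℕ}
    (hy : y ∈ cyl (List.ofFn fun i : Fin n => x i)) : ∀ i, i < n → y i = x i := by
  intro i hi
  have := hy i (by simpa using hi)
  simpa [List.getD, List.getElem?_ofFn, hi] using this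

/-- Cylinders form a basis of the Cantor space. -/
theorem cyl_basis {O : Set Cant} (hO : IsOpen O) {x : Cant} (hx : x ∈ O) :
    ∃ s : List Bool, x ∈ cyl s ∧ cyl s ⊆ O := by
  obtain ⟨I, u, hu, hsub⟩ := isOpen_pi_iff.mp hO x hx
  set n := (I.sup id) + 1 with hn
  refine ⟨List.ofFn fun i : Fin n => x i, mem_cyl_ofFn x n, ?_⟩
  intro y hy
  apply hsub
  intro i hi
  have hin : i < n := Nat.lt_succ_of_le (Finset.le_sup (f := id) hi)
  rw [cyl_ofFn_subset hy i hin]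
  exact (hu i hi).2

theorem isOpen_eq_iUnion_cyl {O : Set Cant} (hO : IsOpen O) :
    O = ⋃ s ∈ {s : List Bool | cyl s ⊆ O}, cyl s := by
  ext x
  simp only [Set.mem_iUnion, Set.mem_setOf_eq]
  constructor
  · intro hx
    obtain ⟨s, hxs, hs⟩ := cyl_basis hO hx
    exact ⟨s, hs, hxs⟩
  · rintro ⟨s, hs, hxs⟩
    exact hs hxs

def flagIdx (n m : ℕ) : ℕ := 2 * Nat.pair n m

def colIdx (n i : ℕ) : ℕ := 2 * Nat.pair n i + 1

/-- The `n`-th column coded into an element of Cantor space. -/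
def col (c : Cant) (n : ℕ) : Cant := fun i => c (colIdx n i)

/-- Build a code with prescribed flags and columns. -/
def mkCode (F : ℕ → ℕ → Bool) (h : ℕ → Cant) : Cant := fun k =>
  if k % 2 = 0 then F (Nat.unpair (k / 2)).1 (Nat.unpair (k / 2)).2
  else h (Nat.unpair (k / 2)).1 (Nat.unpair (k / 2)).2

theorem mkCode_flag (F : ℕ → ℕ → Bool) (h : ℕ → Cant) (n m : ℕ) :
    mkCode F h (flagIdx n m) = F n m := by
  have h1 : flagIdx n m % 2 = 0 := by simp [flagIdx, Nat.mul_mod_right]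
  have h2 : flagIdx n m / 2 = Nat.pair n m := by simp [flagIdx]
  simp [mkCode, h1, h2, Nat.unpair_pair]

theorem mkCode_col (F : ℕ → ℕ → Bool) (h : ℕ → Cant) (n : ℕ) :
    col (mkCode F h) n = h n := by
  funext i
  have h1 : colIdx n i % 2 = 1 := by simp [colIdx]
  have h2 : colIdx n i / 2 = Nat.pair n i := by simp [colIdx]; omega
  simp [col, mkCode, h1, h2, Nat.unpair_pair]

theorem continuous_col_snd {X : Type*} [TopologicalSpace X] (n : ℕ) :
    Continuous (fun p : Cant × X => (col p.1 n, p.2)) := by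
  refine Continuous.prodMk ?_ continuous_snd
  exact continuous_pi fun i => (continuous_apply (colIdx n i)).comp continuous_fst

theorem isClopen_flag {X : Type*} [TopologicalSpace X] (n m : ℕ) :
    IsClopen {p : Cant × X | p.1 (flagIdx n m) = true} := by
  have : {p : Cant × X | p.1 (flagIdx n m) = true}
      = (fun p : Cant × X => p.1 (flagIdx n m)) ⁻¹' {true} := by ext p; simp
  rw [this]
  exact (isClopen_discrete {true}).preimage ((continuous_apply (flagIdx n m)).comp continuous_fst)

/-- Every nonempty initial segment of ordinals below `ω₁` admits an enumeration by `ℕ`. -/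
theorem exists_enum_Iio {η : Ordinal} (hη1 : 1 ≤ η) (hη : η < (Cardinal.aleph 1).ord) :
    ∃ q : ℕ → Ordinal, (∀ n, q n < η) ∧ ∀ μ, μ < η → ∃ n, q n = μ := by
  have hcard : η.card < Cardinal.aleph 1 := Cardinal.lt_ord.mp hη
  have hcard0 : η.card ≤ Cardinal.aleph0 := by
    rwa [← Cardinal.succ_aleph0, Order.lt_succ_iff] at hcard
  have hmk : Cardinal.mk (Set.Iio η) ≤ Cardinal.aleph0 := by
    rw [Ordinal.mk_Iio_ordinal]
    exact le_trans (Cardinal.lift_le.mpr hcard0) (by simp)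
  have : Countable (Set.Iio η) := Cardinal.mk_le_aleph0_iff.mp hmk
  have : Nonempty (Set.Iio η) := ⟨⟨0, lt_of_lt_of_le zero_lt_one hη1⟩⟩
  obtain ⟨q, hq⟩ := exists_surjective_nat (Set.Iio η)
  refine ⟨fun n => (q n : Ordinal), fun n => (q n).2, fun μ hμ => ?_⟩
  obtain ⟨n, hn⟩ := hq ⟨μ, hμ⟩
  exact ⟨n, congrArg Subtype.val hn⟩

/-- Enumeration of ordinals in `[1, ξ)` for `2 ≤ ξ < ω₁`. -/
theorem exists_enum_Ico {ξ : Ordinal} (hξ1 : 1 < ξ) (hξ : ξ < (Cardinal.aleph 1).ord) :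
    ∃ p : ℕ → Ordinal, (∀ n, 1 ≤ p n ∧ p n < ξ) ∧ ∀ ζ, 1 ≤ ζ → ζ < ξ → ∃ n, p n = ζ := by
  obtain ⟨q, hq1, hq2⟩ := exists_enum_Iio (le_of_lt hξ1) hξ
  refine ⟨fun n => if 1 ≤ q n then q n else 1, fun n => ?_, fun ζ h1 h2 => ?_⟩
  · show 1 ≤ (if 1 ≤ q n then q n else 1) ∧ (if 1 ≤ q n then q n else 1) < ξ
    by_cases h : 1 ≤ q n
    · rw [if_pos h]; exact ⟨h, hq1 n⟩
    · rw [if_neg h]; exact ⟨le_refl 1, hξ1⟩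
  · obtain ⟨n, hn⟩ := hq2 ζ h2
    refine ⟨n, ?_⟩
    show (if 1 ≤ q n then q n else 1) = ζ
    rw [hn, if_pos h1]

open Classical in
/-- A fixed enumeration of the ordinals in `[1, ξ)` (junk if none exists). -/
noncomputable def psel (ξ : Ordinal) : ℕ → Ordinal :=
  if h : ∃ p : ℕ → Ordinal, (∀ n, 1 ≤ p n ∧ p n < ξ) ∧ ∀ ζ, 1 ≤ ζ → ζ < ξ → ∃ n, p n = ζ
  then h.choose else fun _ => 0

theorem psel_spec {ξ : Ordinal} (hξ1 : 1 < ξ) (hξ : ξ < (Cardinal.aleph 1).ord) :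
    (∀ n, 1 ≤ psel ξ n ∧ psel ξ n < ξ) ∧ ∀ ζ, 1 ≤ ζ → ζ < ξ → ∃ n, psel ξ n = ζ := by
  have h := exists_enum_Ico hξ1 hξ
  rw [psel, dif_pos h]
  exact h.choose_spec

open Classical in
/-- A fixed enumeration of the ordinals below `η` (junk if there are none). -/
noncomputable def qsel (η : Ordinal) : ℕ → Ordinal :=
  if h : ∃ q : ℕ → Ordinal, (∀ n, q n < η) ∧ ∀ μ, μ < η → ∃ n, q n = μ
  then h.choose else fun _ => 0

theorem qsel_spec {η : Ordinal} (hη1 : 1 ≤ η) (hη : η < (Cardinal.aleph 1).ord) :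
    (∀ n, qsel η n < η) ∧ ∀ μ, μ < η → ∃ n, qsel η n = μ := by
  have h := exists_enum_Iio hη1 hη
  rw [qsel, dif_pos h]
  exact h.choose_spec

open Classical in
/-- Index of `μ` in the enumeration `qsel η` (junk if `μ` is not enumerated). -/
noncomputable def nsel (η μ : Ordinal) : ℕ :=
  if h : ∃ n, qsel η n = μ then h.choose else 0

theorem nsel_spec {η μ : Ordinal} (hη1 : 1 ≤ η) (hη : η < (Cardinal.aleph 1).ord)
    (hμ : μ < η) : qsel η (nsel η μ) = μ := by
  have h := (qsel_spec hη1 hη).2 μ hμ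
  rw [nsel, dif_pos h]
  exact h.choose_spec

open Classical in
/-- The universal sets for the classes `Σ⁰_ξ` of Cantor space. -/
noncomputable def USet : Ordinal → Set (Cant × Cant) :=
  Ordinal.lt_wf.fix fun ξ ih =>
    if ξ = 1 then {p | ∃ s : List Bool, p.1 (Encodable.encode s) = true ∧ p.2 ∈ cyl s}
    else {p | ∃ n m, ∃ hlt : psel ξ m < ξ, 1 ≤ psel ξ m ∧
           p.1 (flagIdx n m) = true ∧ (col p.1 n, p.2) ∉ ih (psel ξ m) hlt}

open Classical in
theorem USet_eq (ξ : Ordinal) : USet ξ =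
    if ξ = 1 then {p | ∃ s : List Bool, p.1 (Encodable.encode s) = true ∧ p.2 ∈ cyl s}
    else {p | ∃ n m, ∃ hlt : psel ξ m < ξ, 1 ≤ psel ξ m ∧
           p.1 (flagIdx n m) = true ∧ (col p.1 n, p.2) ∉ USet (psel ξ m)} := by
  unfold USet
  rw [WellFounded.fix_eq]

theorem USet_main : ∀ ξ : Ordinal, 1 ≤ ξ → ξ < (Cardinal.aleph 1).ord →
    USet ξ ∈ SigmaClass (Cant × Cant) ξ ∧
    ∀ S ∈ SigmaClass Cant ξ, ∃ c : Cant, S = {x | (c, x) ∈ USet ξ} := by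
  intro ξ
  induction ξ using Ordinal.induction with
  | _ ξ ih =>
    intro hξ1 hξω
    by_cases h1 : ξ = 1
    · subst h1
      have hU : USet 1 = {p : Cant × Cant | ∃ s : List Bool,
          p.1 (Encodable.encode s) = true ∧ p.2 ∈ cyl s} := by
        rw [USet_eq, if_pos rfl]
      constructor
      · rw [hU]
        apply isOpen_mem_sigmaClass
        have : {p : Cant × Cant | ∃ s : List Bool,
            p.1 (Encodable.encode s) = true ∧ p.2 ∈ cyl s}
            = ⋃ s : List Bool, ({c : Cant | c (Encodable.encode s) = true} ×ˢ cyl s) := by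
          ext p
          simp [Set.mem_iUnion, Set.mem_prod]
        rw [this]
        apply isOpen_iUnion
        intro s
        exact IsOpen.prod
          (((isClopen_discrete {true}).preimage (continuous_apply _)).isOpen)
          (isClopen_cyl s).isOpen
      · intro S hS
        have hSopen : IsOpen S := mem_sigmaClass_one_iff.mp hS
        classical
        refine ⟨fun k => if ∃ s : List Bool, Encodable.encode s = k ∧ cyl s ⊆ S
          then true else false, ?_⟩
        ext x
        rw [hU]
        simp only [Set.mem_setOf_eq]
        constructor
        · intro hx
          obtain ⟨s, hxs, hsub⟩ := cyl_basis hSopen hx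
          exact ⟨s, by rw [if_pos ⟨s, rfl, hsub⟩], hxs⟩
        · rintro ⟨s, hc, hx⟩
          by_cases hcond : ∃ s' : List Bool, Encodable.encode s' = Encodable.encode s ∧
              cyl s' ⊆ S
          · obtain ⟨s', henc, hsub⟩ := hcond
            have : s' = s := Encodable.encode_injective henc
            exact (this ▸ hsub) hx
          · rw [if_neg hcond] at hc
            exact absurd hc (by simp)
    · -- `ξ > 1`
      have h1' : 1 < ξ := lt_of_le_of_ne hξ1 (Ne.symm h1)
      have pspec := psel_spec h1' hξω
      have hU : USet ξ = {p : Cant × Cant | ∃ n m, ∃ hlt : psel ξ m < ξ, 1 ≤ psel ξ m ∧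
          p.1 (flagIdx n m) = true ∧ (col p.1 n, p.2) ∉ USet (psel ξ m)} := by
        rw [USet_eq, if_neg h1]
      have hωtrans : ∀ m : ℕ, psel ξ m < (Cardinal.aleph 1).ord :=
        fun m => lt_trans (pspec.1 m).2 hξω
      -- the key coding lemma
      have key : ∀ (mseq : ℕ → ℕ) (cseq : ℕ → Cant), ∃ c : Cant,
          (⋃ n, ({x : Cant | (cseq n, x) ∈ USet (psel ξ (mseq n))})ᶜ)
            = {x | (c, x) ∈ USet ξ} := by
        intro mseq cseq
        classical
        refine ⟨mkCode (fun n m => decide (m = mseq n)) cseq, ?_⟩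
        ext x
        rw [hU]
        simp only [Set.mem_iUnion, Set.mem_compl_iff, Set.mem_setOf_eq]
        constructor
        · rintro ⟨n, hx⟩
          refine ⟨n, mseq n, (pspec.1 _).2, (pspec.1 _).1, ?_, ?_⟩
          · rw [mkCode_flag]; simp
          · rw [mkCode_col]; exact hx
        · rintro ⟨n, m, _, _, hflag, hnot⟩
          rw [mkCode_flag] at hflag
          have hm : m = mseq n := by simpa using hflag
          rw [mkCode_col] at hnot
          exact ⟨n, hm ▸ hnot⟩
      constructor
      · -- the universal set is in its own class
        have hrep : USet ξ = ⋃ k : ℕ, (((fun p : Cant × Cant =>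
            (col p.1 (Nat.unpair k).1, p.2)) ⁻¹' USet (psel ξ (Nat.unpair k).2)) ∪
            {p : Cant × Cant | p.1 (flagIdx (Nat.unpair k).1 (Nat.unpair k).2) = true}ᶜ)ᶜ := by
          rw [hU]
          ext p
          simp only [Set.mem_iUnion, Set.mem_compl_iff, Set.mem_union, Set.mem_preimage,
            Set.mem_setOf_eq, not_or, not_not]
          constructor
          · rintro ⟨n, m, _, _, hflag, hnot⟩
            refine ⟨Nat.pair n m, ?_⟩
            rw [Nat.unpair_pair]
            exact ⟨hnot, hflag⟩
          · rintro ⟨k, hnot, hflag⟩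
            exact ⟨(Nat.unpair k).1, (Nat.unpair k).2, (pspec.1 _).2, (pspec.1 _).1,
              hflag, hnot⟩
        rw [hrep]
        apply iUnion_compl_mem_sigmaClass
          (g := fun k => psel ξ (Nat.unpair k).2)
          (fun k => ⟨(pspec.1 _).1, (pspec.1 _).2⟩)
        intro k
        refine (sigmaClass_union_inter_clopen _ _ (isClopen_flag _ _).compl _ ?_).1
        exact sigmaClass_preimage _ _ (continuous_col_snd _) _
          ((ih _ (pspec.1 _).2 (pspec.1 _).1 (hωtrans _)).1)
      · -- universality
        intro S hS
        rcases mem_sigmaClass_iff.mp hS with hSopen | ⟨g, f, hg, rfl⟩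
        · -- `S` open
          classical
          set Ek : ℕ → Set Cant := fun k =>
            {x | ∃ s : List Bool, Encodable.encode s = k ∧ cyl s ⊆ S ∧ x ∈ cyl s} with hEk
          have hEkclopen : ∀ k, IsClopen (Ek k) := by
            intro k
            by_cases hk : ∃ s : List Bool, Encodable.encode s = k ∧ cyl s ⊆ S
            · obtain ⟨s₀, hs₀, hsub₀⟩ := hk
              have : Ek k = cyl s₀ := by
                ext x
                simp only [hEk, Set.mem_setOf_eq]
                constructor
                · rintro ⟨s, hs, _, hx⟩
                  have : s = s₀ := Encodable.encode_injective (hs.trans hs₀.symm)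
                  exact this ▸ hx
                · intro hx
                  exact ⟨s₀, hs₀, hsub₀, hx⟩
              rw [this]
              exact isClopen_cyl s₀
            · have : Ek k = ∅ := by
                ext x
                simp only [hEk, Set.mem_setOf_eq, Set.mem_empty_iff_false, iff_false]
                rintro ⟨s, hs, hsub, _⟩
                exact hk ⟨s, hs, hsub⟩
              rw [this]
              exact isClopen_empty
          have hSeq : S = ⋃ k, Ek k := by
            ext x
            simp only [Set.mem_iUnion]
            constructor
            · intro hx
              obtain ⟨s, hxs, hsub⟩ := cyl_basis hSopen hx
              exact ⟨Encodable.encode s, s, rfl, hsub, hxs⟩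
            · rintro ⟨k, s, _, hsub, hx⟩
              exact hsub hx
          have hζ := pspec.1 0
          choose cseq hcseq using fun k => (ih _ hζ.2 hζ.1 (hωtrans 0)).2 ((Ek k)ᶜ)
            (isOpen_mem_sigmaClass (hEkclopen k).compl.isOpen)
          obtain ⟨c, hc⟩ := key (fun _ => 0) cseq
          refine ⟨c, ?_⟩
          have heq : ⋃ k, Ek k = ⋃ k, ({x : Cant | (cseq k, x) ∈ USet (psel ξ 0)})ᶜ := by
            apply Set.iUnion_congr
            intro k
            rw [← compl_compl (Ek k), hcseq k]
          exact hSeq.trans (heq.trans hc)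
        · -- `S` a union of complements
          have hmseq : ∀ n, ∃ m, psel ξ m = g n :=
            fun n => pspec.2 (g n) (hg n).1 (hg n).2.1
          choose mseq hmseq using hmseq
          have hcseq : ∀ n, ∃ c : Cant, f n = {x | (c, x) ∈ USet (g n)} :=
            fun n => (ih _ (hg n).2.1 (hg n).1 (lt_trans (hg n).2.1 hξω)).2 _ (hg n).2.2
          choose cseq hcseq using hcseq
          obtain ⟨c, hc⟩ := key mseq cseq
          refine ⟨c, ?_⟩
          have heq : ⋃ n, (f n)ᶜ
              = ⋃ n, ({x : Cant | (cseq n, x) ∈ USet (psel ξ (mseq n))})ᶜ := by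
            apply Set.iUnion_congr
            intro n
            rw [hmseq n]
            rw [hcseq n]
          exact heq.trans hc

open Classical in
/-- The family of `Σ⁰_ξ` sets underlying the universal `η`-difference set. -/
noncomputable def WFam (η ξ : Ordinal) : Ordinal → Set (Cant × Cant) := fun μ =>
  if μ < η then {p : Cant × Cant | (col p.1 (nsel η μ), p.2) ∈ USet ξ} else ∅

/-- The universal set for `D_η(Σ⁰_ξ)` on Cantor space. -/
noncomputable def WSet (η ξ : Ordinal) : Set (Cant × Cant) :=
  DiffKernel η (WFam η ξ)

theorem WSet_mem_diffClass {η ξ : Ordinal} (hξ1 : 1 ≤ ξ) (hξ : ξ < (Cardinal.aleph 1).ord) :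
    WSet η ξ ∈ DiffClass η ξ (Cant × Cant) := by
  refine ⟨WFam η ξ, fun μ hμ => ?_, rfl⟩
  rw [WFam, if_pos hμ]
  exact sigmaClass_preimage _ _ (continuous_col_snd _) _ (USet_main ξ hξ1 hξ).1

/-- `WSet` is universal for `D_η(Σ⁰_ξ)` on Cantor space. -/
theorem WSet_universal {η ξ : Ordinal} (hη1 : 1 ≤ η) (hη : η < (Cardinal.aleph 1).ord)
    (hξ1 : 1 ≤ ξ) (hξ : ξ < (Cardinal.aleph 1).ord)
    {B : Set Cant} (hB : B ∈ DiffClass η ξ Cant) :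
    ∃ c : Cant, B = {x | (c, x) ∈ WSet η ξ} := by
  obtain ⟨A, hA, rfl⟩ := hB
  classical
  -- choose codes for the sets in the family
  have hcode : ∀ μ : Ordinal, ∃ c : Cant, μ < η → A μ = {x | (c, x) ∈ USet ξ} := by
    intro μ
    by_cases hμ : μ < η
    · obtain ⟨c, hc⟩ := (USet_main ξ hξ1 hξ).2 (A μ) (hA μ hμ)
      exact ⟨c, fun _ => hc⟩
    · exact ⟨fun _ => false, fun h => absurd h hμ⟩
  choose cc hcc using hcode
  refine ⟨mkCode (fun _ _ => false) (fun k => cc (qsel η k)), ?_⟩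
  have hsec : {x : Cant | (mkCode (fun _ _ => false) (fun k => cc (qsel η k)), x)
      ∈ WSet η ξ} = DiffKernel η (fun μ =>
        {x : Cant | (mkCode (fun _ _ => false) (fun k => cc (qsel η k)), x) ∈ WFam η ξ μ}) :=
    rfl
  rw [hsec]
  apply diffKernel_congr
  intro μ hμ
  rw [WFam]
  simp only [if_pos hμ]
  have hcol : col (mkCode (fun _ _ => false) (fun k => cc (qsel η k))) (nsel η μ)
      = cc μ := by
    rw [mkCode_col, nsel_spec hη1 hη hμ]
  rw [hcc μ hμ]
  ext x
  simp [hcol]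

/-- A zero-dimensional nonempty second-countable space has a countable clopen
neighborhood basis, as a sequence. -/
theorem exists_clopen_basis_seq (Z : Type*) [TopologicalSpace Z] [Nonempty Z]
    [SecondCountableTopology Z]
    (hzd : ∃ B : Set (Set Z), TopologicalSpace.IsTopologicalBasis B ∧ ∀ U ∈ B, IsClopen U) :
    ∃ W : ℕ → Set Z, (∀ n, IsClopen (W n)) ∧
      ∀ (x : Z) (U : Set Z), x ∈ U → IsOpen U → ∃ n, x ∈ W n ∧ W n ⊆ U := by
  classical
  obtain ⟨B, hB, hBclopen⟩ := hzd
  obtain ⟨b, hbc, -, hb⟩ := TopologicalSpace.exists_countable_basis Z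
  -- enumerate the countable basis `b`
  have hbne : b.Nonempty := by
    rcases Set.eq_empty_or_nonempty b with h | h
    · exfalso
      obtain ⟨x⟩ := ‹Nonempty Z›
      obtain ⟨v, hv, hxv, -⟩ := hb.exists_subset_of_mem_open (Set.mem_univ x) isOpen_univ
      rw [h] at hv
      exact hv
    · exact h
  have : Countable b := hbc.to_subtype
  have : Nonempty b := hbne.to_subtype
  obtain ⟨v, hv⟩ := exists_surjective_nat b
  -- for each pair `(n, m)`, pick a clopen basic set squeezed between `v n` and `v m`
  set pick : ℕ × ℕ → Set Z := fun nm =>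
    if h : ∃ U ∈ B, (v nm.1 : Set Z) ⊆ U ∧ U ⊆ (v nm.2 : Set Z) then h.choose else ∅
    with hpick
  refine ⟨fun k => pick (Nat.unpair k), fun k => ?_, fun x U hxU hU => ?_⟩
  · rw [hpick]
    dsimp only
    split
    · next h => exact hBclopen _ h.choose_spec.1
    · exact isClopen_empty
  · -- find basic sets `x ∈ v n ⊆ U' ⊆ v m ⊆ U` with `U' ∈ B` clopen
    obtain ⟨Vm, hVm, hxVm, hVmU⟩ := hb.exists_subset_of_mem_open hxU hU
    obtain ⟨m, hm⟩ := hv ⟨Vm, hVm⟩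
    obtain ⟨U', hU', hxU', hU'Vm⟩ := hB.exists_subset_of_mem_open hxVm
      (hb.isOpen hVm)
    obtain ⟨Vn, hVn, hxVn, hVnU'⟩ := hb.exists_subset_of_mem_open hxU'
      (hBclopen _ hU').isOpen
    obtain ⟨n, hn⟩ := hv ⟨Vn, hVn⟩
    have hex : ∃ W ∈ B, (v n : Set Z) ⊆ W ∧ W ⊆ (v m : Set Z) := by
      refine ⟨U', hU', ?_, ?_⟩
      · rw [hn]; exact hVnU'
      · rw [hm]; exact hU'Vm
    refine ⟨Nat.pair n m, ?_, ?_⟩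
    · show x ∈ pick (Nat.unpair (Nat.pair n m))
      rw [Nat.unpair_pair, hpick]
      dsimp only
      rw [dif_pos hex]
      apply hex.choose_spec.2.1
      rw [hn]
      exact hxVn
    · show pick (Nat.unpair (Nat.pair n m)) ⊆ U
      rw [Nat.unpair_pair, hpick]
      dsimp only
      rw [dif_pos hex]
      refine subset_trans hex.choose_spec.2.2 ?_
      rw [hm]
      exact hVmU

section ZSide

variable {Z : Type*} [TopologicalSpace Z]

/-- The characteristic-function map into Cantor space determined by a sequence of sets. -/
noncomputable def chi (W : ℕ → Set Z) : Z → Cant :=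
  fun z n => (W n).boolIndicator z

theorem continuous_chi {W : ℕ → Set Z} (hW : ∀ n, IsClopen (W n)) :
    Continuous (chi W) := by
  apply continuous_pi
  intro n
  exact (continuous_boolIndicator_iff_isClopen (W n)).mpr (hW n)

theorem chi_preimage {W : ℕ → Set Z} (n : ℕ) :
    chi W ⁻¹' {x : Cant | x n = true} = W n := by
  ext z
  simp only [Set.mem_preimage, Set.mem_setOf_eq, chi]
  exact ((W n).mem_iff_boolIndicator z).symm

/-- Every open set of `Z` is the `chi`-preimage of an open set of Cantor space. -/
theorem isOpen_eq_chi_preimage {W : ℕ → Set Z} (hW : ∀ n, IsClopen (W n))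
    (hbas : ∀ (x : Z) (U : Set Z), x ∈ U → IsOpen U → ∃ n, x ∈ W n ∧ W n ⊆ U)
    {O : Set Z} (hO : IsOpen O) : ∃ O' : Set Cant, IsOpen O' ∧ O = chi W ⁻¹' O' := by
  refine ⟨⋃ n ∈ {n : ℕ | W n ⊆ O}, {x : Cant | x n = true}, ?_, ?_⟩
  · exact isOpen_biUnion fun n _ =>
      ((isClopen_discrete {true}).preimage (continuous_apply n)).isOpen
  · ext z
    rw [Set.preimage_iUnion₂]
    simp only [Set.mem_iUnion, Set.mem_setOf_eq]
    constructor
    · intro hz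
      obtain ⟨n, hzn, hsub⟩ := hbas z O hz hO
      refine ⟨n, hsub, ?_⟩
      rw [chi_preimage]
      exact hzn
    · rintro ⟨n, hsub, hzn⟩
      rw [chi_preimage] at hzn
      exact hsub hzn

/-- Every `Σ⁰_ξ` set of `Z` is the `chi`-preimage of a `Σ⁰_ξ` set of Cantor space. -/
theorem sigmaClass_eq_chi_preimage {W : ℕ → Set Z} (hW : ∀ n, IsClopen (W n))
    (hbas : ∀ (x : Z) (U : Set Z), x ∈ U → IsOpen U → ∃ n, x ∈ W n ∧ W n ⊆ U) :
    ∀ (ξ : Ordinal), ∀ S ∈ SigmaClass Z ξ, ∃ S' ∈ SigmaClass Cant ξ, S = chi W ⁻¹' S' := by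
  intro ξ
  induction ξ using Ordinal.induction with
  | _ ξ ih =>
    intro S hS
    rcases mem_sigmaClass_iff.mp hS with h | ⟨g, f, hg, rfl⟩
    · obtain ⟨O', hO', hOe⟩ := isOpen_eq_chi_preimage hW hbas h
      exact ⟨O', isOpen_mem_sigmaClass hO', hOe⟩
    · have : ∀ n, ∃ S' ∈ SigmaClass Cant (g n), f n = chi W ⁻¹' S' :=
        fun n => ih (g n) (hg n).2.1 (f n) (hg n).2.2
      choose S' hS' hfS' using this
      refine ⟨⋃ n, (S' n)ᶜ, iUnion_compl_mem_sigmaClass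
        (fun n => ⟨(hg n).1, (hg n).2.1⟩) hS', ?_⟩
      rw [Set.preimage_iUnion]
      apply Set.iUnion_congr
      intro n
      rw [Set.preimage_compl, hfS' n]

/-- Every `D_η(Σ⁰_ξ)` set of `Z` is the `chi`-preimage of a `D_η(Σ⁰_ξ)` set of Cantor space. -/
theorem diffClass_eq_chi_preimage {W : ℕ → Set Z} (hW : ∀ n, IsClopen (W n))
    (hbas : ∀ (x : Z) (U : Set Z), x ∈ U → IsOpen U → ∃ n, x ∈ W n ∧ W n ⊆ U)
    {η ξ : Ordinal} {B : Set Z} (hB : B ∈ DiffClass η ξ Z) :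
    ∃ B' ∈ DiffClass η ξ Cant, B = chi W ⁻¹' B' := by
  classical
  obtain ⟨A, hA, rfl⟩ := hB
  have hch : ∀ μ : Ordinal, ∃ S' : Set Cant, μ < η →
      S' ∈ SigmaClass Cant ξ ∧ A μ = chi W ⁻¹' S' := by
    intro μ
    by_cases hμ : μ < η
    · obtain ⟨S', h1, h2⟩ := sigmaClass_eq_chi_preimage hW hbas ξ (A μ) (hA μ hμ)
      exact ⟨S', fun _ => ⟨h1, h2⟩⟩
    · exact ⟨∅, fun h => absurd h hμ⟩
  choose A' hA' using hch
  refine ⟨DiffKernel η A', ⟨A', fun μ hμ => (hA' μ hμ).1, rfl⟩, ?_⟩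
  rw [diffKernel_preimage]
  exact diffKernel_congr fun μ hμ => (hA' μ hμ).2

end ZSide

section Extension

variable {X Z : Type*} [TopologicalSpace X] [TopologicalSpace Z]

/-- Open sets extend along a continuous injection from a compact space into a T2 space. -/
theorem isOpen_extend [CompactSpace X] [T2Space Z] {j : X → Z} (hj : Continuous j)
    (hinj : Function.Injective j) {S : Set X} (hS : IsOpen S) :
    ∃ O : Set Z, IsOpen O ∧ j ⁻¹' O = S := by
  refine ⟨(j '' Sᶜ)ᶜ, ?_, ?_⟩
  · rw [isOpen_compl_iff]
    exact ((hS.isClosed_compl.isCompact).image hj).isClosed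
  · ext x
    simp only [Set.mem_preimage, Set.mem_compl_iff, Set.mem_image]
    constructor
    · intro h
      by_contra hx
      exact h ⟨x, hx, rfl⟩
    · rintro hx ⟨y, hy, hxy⟩
      exact hy (hinj hxy ▸ hx)

/-- `Σ⁰_ξ` sets extend along a continuous injection from a compact space into a T2 space. -/
theorem sigmaClass_extend [CompactSpace X] [T2Space Z] {j : X → Z} (hj : Continuous j)
    (hinj : Function.Injective j) :
    ∀ (ξ : Ordinal), ∀ S ∈ SigmaClass X ξ, ∃ S' ∈ SigmaClass Z ξ, j ⁻¹' S' = S := by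
  intro ξ
  induction ξ using Ordinal.induction with
  | _ ξ ih =>
    intro S hS
    rcases mem_sigmaClass_iff.mp hS with h | ⟨g, f, hg, rfl⟩
    · obtain ⟨O, hO, hOe⟩ := isOpen_extend hj hinj h
      exact ⟨O, isOpen_mem_sigmaClass hO, hOe⟩
    · have hch : ∀ n, ∃ S' ∈ SigmaClass Z (g n), j ⁻¹' S' = f n :=
        fun n => ih (g n) (hg n).2.1 (f n) (hg n).2.2
      choose S' hS' hfS' using hch
      refine ⟨⋃ n, (S' n)ᶜ, iUnion_compl_mem_sigmaClass
        (fun n => ⟨(hg n).1, (hg n).2.1⟩) hS', ?_⟩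
      rw [Set.preimage_iUnion]
      apply Set.iUnion_congr
      intro n
      rw [Set.preimage_compl, hfS' n]

/-- `D_η(Σ⁰_ξ)` sets extend along a continuous injection from a compact space into T2. -/
theorem diffClass_extend [CompactSpace X] [T2Space Z] {j : X → Z} (hj : Continuous j)
    (hinj : Function.Injective j) {η ξ : Ordinal} {B : Set X} (hB : B ∈ DiffClass η ξ X) :
    ∃ B' ∈ DiffClass η ξ Z, j ⁻¹' B' = B := by
  classical
  obtain ⟨A, hA, rfl⟩ := hB
  have hch : ∀ μ : Ordinal, ∃ S' : Set Z, μ < η →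
      S' ∈ SigmaClass Z ξ ∧ j ⁻¹' S' = A μ := by
    intro μ
    by_cases hμ : μ < η
    · obtain ⟨S', h1, h2⟩ := sigmaClass_extend hj hinj ξ (A μ) (hA μ hμ)
      exact ⟨S', fun _ => ⟨h1, h2⟩⟩
    · exact ⟨∅, fun h => absurd h hμ⟩
  choose A' hA' using hch
  refine ⟨DiffKernel η A', ⟨A', fun μ hμ => (hA' μ hμ).1, rfl⟩, ?_⟩
  rw [diffKernel_preimage]
  exact diffKernel_congr fun μ hμ => (hA' μ hμ).2

end Extension

/-- The interleaving injection of a pair of Cantor points into one. -/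
def interleave : Cant × Cant → Cant := fun p k =>
  if k % 2 = 0 then p.1 (k / 2) else p.2 (k / 2)

theorem continuous_interleave : Continuous interleave := by
  apply continuous_pi
  intro k
  by_cases h : k % 2 = 0
  · simp only [interleave, h, if_true]
    exact (continuous_apply (k / 2)).comp continuous_fst
  · simp only [interleave, h, if_false]
    exact (continuous_apply (k / 2)).comp continuous_snd

theorem injective_interleave : Function.Injective interleave := by
  rintro ⟨a, b⟩ ⟨a', b'⟩ h
  have h1 : ∀ i, a i = a' i := by
    intro i
    have := congrFun h (2 * i)
    have e1 : (2 * i) % 2 = 0 := by omega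
    have e2 : (2 * i) / 2 = i := by omega
    simpa [interleave, e1, e2] using this
  have h2 : ∀ i, b i = b' i := by
    intro i
    have := congrFun h (2 * i + 1)
    have e1 : ¬((2 * i + 1) % 2 = 0) := by omega
    have e2 : (2 * i + 1) / 2 = i := by omega
    simpa [interleave, e1, e2] using this
  exact Prod.ext (funext h1) (funext h2)


/-- For an uncountable zero-dimensional Polish space `Z` and `1 ≤ η, ξ < ω₁`, the class
`D_η(Σ⁰_ξ(Z))` is a non-selfdual Wadge class in `Z`. -/
theorem statement14 (Z : Type) [TopologicalSpace Z] [PolishSpace Z] [Uncountable Z]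
    (hne : Nonempty Z)
    (hzd : ∃ B : Set (Set Z), TopologicalSpace.IsTopologicalBasis B ∧ ∀ U ∈ B, IsClopen U)
    (η ξ : Ordinal) (hη1 : 1 ≤ η) (hη : η < (Cardinal.aleph 1).ord)
    (hξ1 : 1 ≤ ξ) (hξ : ξ < (Cardinal.aleph 1).ord) :
    (∃ A : Set Z, DiffClass η ξ Z = {B | WadgeLE B A}) ∧
    DiffClass η ξ Z ≠ (fun A => Aᶜ) '' DiffClass η ξ Z := by
  classical
  -- a continuous injection of Cantor space into `Z`
  obtain ⟨ι, -, hιcont, hιinj⟩ :=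
    isClosed_univ.exists_nat_bool_injection_of_not_countable
      (α := Z) Set.not_countable_univ
  -- a countable clopen basis of `Z`
  obtain ⟨W, hWclopen, hWbas⟩ := exists_clopen_basis_seq Z hzd
  set e : Z → Cant := chi W with he
  have hecont : Continuous e := continuous_chi hWclopen
  -- the continuous injection of pairs into `Z`
  set j : Cant × Cant → Z := ι ∘ interleave with hj
  have hjcont : Continuous j := hιcont.comp continuous_interleave
  have hjinj : Function.Injective j := hιinj.comp injective_interleave
  -- the complete set `A`
  obtain ⟨A, hADiff, hAj⟩ := diffClass_extend hjcont hjinj (WSet_mem_diffClass hξ1 hξ)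
  constructor
  · refine ⟨A, ?_⟩
    ext B
    simp only [Set.mem_setOf_eq]
    constructor
    · intro hB
      obtain ⟨B', hB', hBe⟩ := diffClass_eq_chi_preimage hWclopen hWbas hB
      obtain ⟨c, hc⟩ := WSet_universal hη1 hη hξ1 hξ hB'
      refine ⟨fun z => j (c, e z), hjcont.comp (continuous_const.prodMk hecont), ?_⟩
      have hcalc : (fun z => j (c, e z)) ⁻¹' A = e ⁻¹' {x : Cant | (c, x) ∈ WSet η ξ} := by
        ext z
        simp only [Set.mem_preimage, Set.mem_setOf_eq]
        rw [← hAj]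
        rfl
      rw [hcalc, ← hc, ← hBe]
    · rintro ⟨f, hf, rfl⟩
      exact diffClass_preimage f hf hADiff
  · intro hsd
    -- the diagonal set
    set D : Set Cant := {x | (x, x) ∈ WSet η ξ} with hD
    have hDmem : D ∈ DiffClass η ξ Cant := by
      have : D = (fun x : Cant => ((x, x) : Cant × Cant)) ⁻¹' WSet η ξ := rfl
      rw [this]
      exact diffClass_preimage _ (continuous_id.prodMk continuous_id)
        (WSet_mem_diffClass hξ1 hξ)
    obtain ⟨T, hT, hTι⟩ := diffClass_extend hιcont hιinj (η := η) (ξ := ξ) hDmem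
    have hTmem : T ∈ (fun A : Set Z => Aᶜ) '' DiffClass η ξ Z := hsd ▸ hT
    obtain ⟨T₀, hT₀, hTT₀⟩ := hTmem
    have hDc : Dᶜ ∈ DiffClass η ξ Cant := by
      have hcalc : ι ⁻¹' T₀ = Dᶜ := by
        have : T₀ = Tᶜ := by rw [← hTT₀, compl_compl]
        rw [this, Set.preimage_compl, hTι]
      rw [← hcalc]
      exact diffClass_preimage ι hιcont hT₀
    obtain ⟨c, hc⟩ := WSet_universal hη1 hη hξ1 hξ hDc
    have h1 : c ∈ Dᶜ ↔ (c, c) ∈ WSet η ξ := by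
      rw [hc]
      exact Iff.rfl
    have h2 : c ∈ Dᶜ ↔ (c, c) ∉ WSet η ξ := by
      rw [Set.mem_compl_iff, hD]
      exact Iff.rfl
    tauto
end
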